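/- arXiv:2310.19927 — 6 statements merged into one kernel-verified Lean document; each statement's English description precedes it below -/
import Mathlib

section
/- Under the model rollout setup, for every i ≥ 0 and every θ ∈ Θ, the map ŝ_i : Θ → S is differentiable and its Fréchet derivative satisfies ‖D_θ ŝ_i(θ)‖ ≤ L_f̂ · L_θ · ∑_{j=0}^{i−1} M^j, where M = L_f̂ · (1 + L_π). In particular the bound is 0 for i = 0. -/
open Finset

/-- Model rollout: states `ŝ_i : Θ → S` generated from the constant initial state `s₀`
by `ŝ₀(θ) = s₀`, `ŝ_{i+1}(θ) = f(ŝ_i(θ), π(θ, ŝ_i(θ)))`. -/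
def sHat {Θ S A : Type*} (π : Θ × S → A) (f : S × A → S) (s₀ : S) : ℕ → Θ → S
  | 0 => fun _ => s₀
  | (i + 1) => fun θ => f (sHat π f s₀ i θ, π (θ, sHat π f s₀ i θ))

/-- Model rollout: actions `â_i(θ) = π(θ, ŝ_i(θ))`. -/
def aHat {Θ S A : Type*} (π : Θ × S → A) (f : S × A → S) (s₀ : S) (i : ℕ) : Θ → A :=
  fun θ => π (θ, sHat π f s₀ i θ)

/-- `K̂(i) = (1 + L_π) · L_f̂ · L_θ · ∑_{j=0}^{i−1} (L_f̂ (1 + L_π))^j + L_θ`. -/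
noncomputable def Khat (Lπ Lf Lθ : ℝ) (i : ℕ) : ℝ :=
  (1 + Lπ) * Lf * Lθ * ∑ j ∈ Finset.range i, (Lf * (1 + Lπ)) ^ j + Lθ

/-- **Pathwise state-derivative growth bound.** Under the model rollout setup, every
`ŝ_i : Θ → S` is differentiable with `‖D_θ ŝ_i(θ)‖ ≤ L_f̂ L_θ ∑_{j<i} M^j`,
`M = L_f̂ (1 + L_π)`; in particular the bound is `0` for `i = 0`. -/
theorem stmt3 {Θ S A : Type*}
    [NormedAddCommGroup Θ] [NormedSpace ℝ Θ]
    [NormedAddCommGroup S] [NormedSpace ℝ S]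
    [NormedAddCommGroup A] [NormedSpace ℝ A]
    (π : Θ × S → A) (f : S × A → S) (s₀ : S)
    (Lθ Lπ Lf : ℝ)
    (hπdiff : Differentiable ℝ π)
    (hπθ : ∀ p : Θ × S, ‖fderiv ℝ (fun θ : Θ => π (θ, p.2)) p.1‖ ≤ Lθ)
    (hπs : ∀ p : Θ × S, ‖fderiv ℝ (fun s : S => π (p.1, s)) p.2‖ ≤ Lπ)
    (hfdiff : Differentiable ℝ f)
    (hfs : ∀ p : S × A, ‖fderiv ℝ (fun s : S => f (s, p.2)) p.1‖ ≤ Lf)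
    (hfa : ∀ p : S × A, ‖fderiv ℝ (fun a : A => f (p.1, a)) p.2‖ ≤ Lf) :
    ∀ (i : ℕ) (θ : Θ),
      DifferentiableAt ℝ (sHat π f s₀ i) θ ∧
        ‖fderiv ℝ (sHat π f s₀ i) θ‖ ≤
          Lf * Lθ * ∑ j ∈ Finset.range i, (Lf * (1 + Lπ)) ^ j := by

  -- nonnegativity of the constants
  have hLθ : 0 ≤ Lθ := le_trans (norm_nonneg _) (hπθ ((0 : Θ), s₀))
  have hLπ : 0 ≤ Lπ := le_trans (norm_nonneg _) (hπs ((0 : Θ), s₀))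
  have hLf : 0 ≤ Lf := le_trans (norm_nonneg _) (hfs (s₀, π ((0 : Θ), s₀)))
  intro i
  induction i with
  | zero =>
    intro θ
    refine ⟨differentiableAt_const s₀, ?_⟩
    simp [sHat, fderiv_const]
  | succ i ih =>
    intro θ
    obtain ⟨hdiff, hbound⟩ := ih θ
    set s := sHat π f s₀ i θ with hs
    set a := π (θ, s) with ha
    have hS : HasFDerivAt (sHat π f s₀ i) (fderiv ℝ (sHat π f s₀ i) θ) θ :=
      hdiff.hasFDerivAt
    set Ds := fderiv ℝ (sHat π f s₀ i) θ with hDs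
    have hπ : HasFDerivAt π (fderiv ℝ π (θ, s)) (θ, s) := (hπdiff (θ, s)).hasFDerivAt
    set Dπ := fderiv ℝ π (θ, s) with hDπ
    have h1 : HasFDerivAt (fun θ' => (θ', sHat π f s₀ i θ'))
        ((ContinuousLinearMap.id ℝ Θ).prod Ds) θ := HasFDerivAt.prodMk (hasFDerivAt_id θ) hS
    have hA : HasFDerivAt (fun θ' => π (θ', sHat π f s₀ i θ'))
        (Dπ.comp ((ContinuousLinearMap.id ℝ Θ).prod Ds)) θ := hπ.comp θ h1
    set DA := Dπ.comp ((ContinuousLinearMap.id ℝ Θ).prod Ds) with hDA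
    have hf' : HasFDerivAt f (fderiv ℝ f (s, a)) (s, a) := (hfdiff (s, a)).hasFDerivAt
    set Df := fderiv ℝ f (s, a) with hDf
    have hg : HasFDerivAt (fun θ' => (sHat π f s₀ i θ', π (θ', sHat π f s₀ i θ')))
        (Ds.prod DA) θ := HasFDerivAt.prodMk hS hA
    have hT : HasFDerivAt (sHat π f s₀ (i + 1)) (Df.comp (Ds.prod DA)) θ := by
      have := hf'.comp θ hg
      exact this
    -- partial derivative bounds for f
    have hDfl : ‖Df.comp (ContinuousLinearMap.inl ℝ S A)‖ ≤ Lf := by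
      have h : HasFDerivAt (fun x : S => f (x, a))
          (Df.comp (ContinuousLinearMap.inl ℝ S A)) s :=
        hf'.comp s (hasFDerivAt_prodMk_left s a)
      have := hfs (s, a)
      rwa [h.fderiv] at this
    have hDfr : ‖Df.comp (ContinuousLinearMap.inr ℝ S A)‖ ≤ Lf := by
      have h : HasFDerivAt (fun y : A => f (s, y))
          (Df.comp (ContinuousLinearMap.inr ℝ S A)) a :=
        hf'.comp a (hasFDerivAt_prodMk_right s a)
      have := hfa (s, a)
      rwa [h.fderiv] at this
    -- partial derivative bounds for π
    have hDπl : ‖Dπ.comp (ContinuousLinearMap.inl ℝ Θ S)‖ ≤ Lθ := by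
      have h : HasFDerivAt (fun x : Θ => π (x, s))
          (Dπ.comp (ContinuousLinearMap.inl ℝ Θ S)) θ :=
        hπ.comp θ (hasFDerivAt_prodMk_left θ s)
      have := hπθ (θ, s)
      rwa [h.fderiv] at this
    have hDπr : ‖Dπ.comp (ContinuousLinearMap.inr ℝ Θ S)‖ ≤ Lπ := by
      have h : HasFDerivAt (fun y : S => π (θ, y))
          (Dπ.comp (ContinuousLinearMap.inr ℝ Θ S)) s :=
        hπ.comp s (hasFDerivAt_prodMk_right θ s)
      have := hπs (θ, s)
      rwa [h.fderiv] at this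
    -- bound on ‖DA‖
    have hDAle : ‖DA‖ ≤ Lθ + Lπ * ‖Ds‖ := by
      refine ContinuousLinearMap.opNorm_le_bound _ ?_ ?_
      · have : 0 ≤ Lπ * ‖Ds‖ := mul_nonneg hLπ (norm_nonneg _)
        linarith
      · intro x
        have hsplit : DA x = (Dπ.comp (ContinuousLinearMap.inl ℝ Θ S)) x
            + (Dπ.comp (ContinuousLinearMap.inr ℝ Θ S)) (Ds x) := by
          simp only [ContinuousLinearMap.comp_apply, ContinuousLinearMap.prod_apply,
            ContinuousLinearMap.id_apply, ContinuousLinearMap.inl_apply,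
            ContinuousLinearMap.inr_apply, hDA]
          rw [← map_add]
          congr 1
          simp
        calc ‖DA x‖ ≤ ‖(Dπ.comp (ContinuousLinearMap.inl ℝ Θ S)) x‖
              + ‖(Dπ.comp (ContinuousLinearMap.inr ℝ Θ S)) (Ds x)‖ := by
              rw [hsplit]; exact norm_add_le _ _
          _ ≤ Lθ * ‖x‖ + Lπ * (‖Ds‖ * ‖x‖) := by
              gcongr
              · exact (Dπ.comp (ContinuousLinearMap.inl ℝ Θ S)).le_of_opNorm_le hDπl x
              · calc ‖(Dπ.comp (ContinuousLinearMap.inr ℝ Θ S)) (Ds x)‖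
                    ≤ Lπ * ‖Ds x‖ :=
                      (Dπ.comp (ContinuousLinearMap.inr ℝ Θ S)).le_of_opNorm_le hDπr _
                  _ ≤ Lπ * (‖Ds‖ * ‖x‖) := by
                      exact mul_le_mul_of_nonneg_left (Ds.le_opNorm x) hLπ
          _ = (Lθ + Lπ * ‖Ds‖) * ‖x‖ := by ring
    -- bound on the total derivative
    have hTle : ‖Df.comp (Ds.prod DA)‖ ≤ Lf * ‖Ds‖ + Lf * ‖DA‖ := by
      refine ContinuousLinearMap.opNorm_le_bound _ ?_ ?_
      · have h1 : 0 ≤ Lf * ‖Ds‖ := mul_nonneg hLf (norm_nonneg _)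
        have h2 : 0 ≤ Lf * ‖DA‖ := mul_nonneg hLf (norm_nonneg _)
        linarith
      · intro x
        have hsplit : (Df.comp (Ds.prod DA)) x
            = (Df.comp (ContinuousLinearMap.inl ℝ S A)) (Ds x)
            + (Df.comp (ContinuousLinearMap.inr ℝ S A)) (DA x) := by
          simp only [ContinuousLinearMap.comp_apply, ContinuousLinearMap.prod_apply,
            ContinuousLinearMap.inl_apply, ContinuousLinearMap.inr_apply]
          rw [← map_add]
          congr 1
          simp
        calc ‖(Df.comp (Ds.prod DA)) x‖
            ≤ ‖(Df.comp (ContinuousLinearMap.inl ℝ S A)) (Ds x)‖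
              + ‖(Df.comp (ContinuousLinearMap.inr ℝ S A)) (DA x)‖ := by
              rw [hsplit]; exact norm_add_le _ _
          _ ≤ Lf * (‖Ds‖ * ‖x‖) + Lf * (‖DA‖ * ‖x‖) := by
              gcongr
              · calc ‖(Df.comp (ContinuousLinearMap.inl ℝ S A)) (Ds x)‖
                    ≤ Lf * ‖Ds x‖ :=
                      (Df.comp (ContinuousLinearMap.inl ℝ S A)).le_of_opNorm_le hDfl _
                  _ ≤ Lf * (‖Ds‖ * ‖x‖) :=
                      mul_le_mul_of_nonneg_left (Ds.le_opNorm x) hLf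
              · calc ‖(Df.comp (ContinuousLinearMap.inr ℝ S A)) (DA x)‖
                    ≤ Lf * ‖DA x‖ :=
                      (Df.comp (ContinuousLinearMap.inr ℝ S A)).le_of_opNorm_le hDfr _
                  _ ≤ Lf * (‖DA‖ * ‖x‖) :=
                      mul_le_mul_of_nonneg_left (DA.le_opNorm x) hLf
          _ = (Lf * ‖Ds‖ + Lf * ‖DA‖) * ‖x‖ := by ring
    refine ⟨hT.differentiableAt, ?_⟩
    rw [hT.fderiv]
    have hM : (0:ℝ) ≤ Lf * (1 + Lπ) := mul_nonneg hLf (by linarith)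
    have hSum : (0:ℝ) ≤ ∑ j ∈ Finset.range i, (Lf * (1 + Lπ)) ^ j :=
      Finset.sum_nonneg fun j _ => pow_nonneg hM j
    have hgeo : ∑ j ∈ Finset.range (i + 1), (Lf * (1 + Lπ)) ^ j
        = (Lf * (1 + Lπ)) * ∑ j ∈ Finset.range i, (Lf * (1 + Lπ)) ^ j + 1 :=
      geom_sum_succ
    rw [hgeo]
    have step1 : Lf * ‖DA‖ ≤ Lf * (Lθ + Lπ * ‖Ds‖) :=
      mul_le_mul_of_nonneg_left hDAle hLf
    have step2 : Lf * (1 + Lπ) * ‖Ds‖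
        ≤ Lf * (1 + Lπ) * (Lf * Lθ * ∑ j ∈ Finset.range i, (Lf * (1 + Lπ)) ^ j) :=
      mul_le_mul_of_nonneg_left hbound hM
    calc ‖Df.comp (Ds.prod DA)‖ ≤ Lf * ‖Ds‖ + Lf * ‖DA‖ := hTle
      _ ≤ Lf * ‖Ds‖ + Lf * (Lθ + Lπ * ‖Ds‖) := by linarith
      _ = Lf * Lθ + Lf * (1 + Lπ) * ‖Ds‖ := by ring
      _ ≤ Lf * Lθ + Lf * (1 + Lπ) * (Lf * Lθ * ∑ j ∈ Finset.range i, (Lf * (1 + Lπ)) ^ j) := by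
          linarith
      _ = Lf * Lθ * ((Lf * (1 + Lπ)) * ∑ j ∈ Finset.range i, (Lf * (1 + Lπ)) ^ j + 1) := by
          ring
end

section
/- Under the model rollout setup, for every i ≥ 0 and every θ ∈ Θ, the map â_i : Θ → A is differentiable with ‖D_θ â_i(θ)‖ ≤ L_π · L_f̂ · L_θ · ∑_{j=0}^{i−1} M^j + L_θ, where M = L_f̂ · (1 + L_π); consequently ‖D_θ ŝ_i(θ)‖ + ‖D_θ â_i(θ)‖ ≤ K̂(i), where K̂(i) := (1 + L_π) · L_f̂ · L_θ · ∑_{j=0}^{i−1} M^j + L_θ. -/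
open Finset

lemma comp2 {X Y Z W : Type*}
    [NormedAddCommGroup X] [NormedSpace ℝ X]
    [NormedAddCommGroup Y] [NormedSpace ℝ Y]
    [NormedAddCommGroup Z] [NormedSpace ℝ Z]
    [NormedAddCommGroup W] [NormedSpace ℝ W]
    (F : Y × Z → W) (hF : Differentiable ℝ F)
    (u : X → Y) (v : X → Z) (x : X)
    (hu : DifferentiableAt ℝ u x) (hv : DifferentiableAt ℝ v x)
    (C1 C2 : ℝ)
    (h1 : ∀ p : Y × Z, ‖fderiv ℝ (fun y => F (y, p.2)) p.1‖ ≤ C1)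
    (h2 : ∀ p : Y × Z, ‖fderiv ℝ (fun z => F (p.1, z)) p.2‖ ≤ C2) :
    DifferentiableAt ℝ (fun x => F (u x, v x)) x ∧
    ‖fderiv ℝ (fun x => F (u x, v x)) x‖ ≤
      C1 * ‖fderiv ℝ u x‖ + C2 * ‖fderiv ℝ v x‖ := by
  set p : Y × Z := (u x, v x) with hp
  have hFp : HasFDerivAt F (fderiv ℝ F p) p := (hF p).hasFDerivAt
  have hinner : HasFDerivAt (fun x => (u x, v x))
      ((fderiv ℝ u x).prod (fderiv ℝ v x)) x :=
    HasFDerivAt.prodMk hu.hasFDerivAt hv.hasFDerivAt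
  have hcomp : HasFDerivAt (fun x => F (u x, v x))
      ((fderiv ℝ F p).comp ((fderiv ℝ u x).prod (fderiv ℝ v x))) x :=
    hFp.comp x hinner
  refine ⟨hcomp.differentiableAt, ?_⟩
  rw [hcomp.fderiv]
  have h1' : fderiv ℝ (fun y => F (y, p.2)) p.1
      = (fderiv ℝ F p).comp (ContinuousLinearMap.inl ℝ Y Z) :=
    (hFp.comp p.1 (hasFDerivAt_prodMk_left p.1 p.2)).fderiv
  have h2' : fderiv ℝ (fun z => F (p.1, z)) p.2
      = (fderiv ℝ F p).comp (ContinuousLinearMap.inr ℝ Y Z) :=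
    (hFp.comp p.2 (hasFDerivAt_prodMk_right p.1 p.2)).fderiv
  have hC1 : 0 ≤ C1 := le_trans (norm_nonneg _) (h1 p)
  have hC2 : 0 ≤ C2 := le_trans (norm_nonneg _) (h2 p)
  refine ContinuousLinearMap.opNorm_le_bound _
    (by positivity) (fun w => ?_)
  have hsplit : ((fderiv ℝ F p).comp ((fderiv ℝ u x).prod (fderiv ℝ v x))) w
      = (fderiv ℝ (fun y => F (y, p.2)) p.1) (fderiv ℝ u x w)
        + (fderiv ℝ (fun z => F (p.1, z)) p.2) (fderiv ℝ v x w) := by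
    rw [h1', h2']
    simp only [ContinuousLinearMap.comp_apply, ContinuousLinearMap.prod_apply,
      ContinuousLinearMap.inl_apply, ContinuousLinearMap.inr_apply]
    rw [← map_add]
    congr 1
    simp [Prod.ext_iff]
  rw [hsplit]
  calc ‖(fderiv ℝ (fun y => F (y, p.2)) p.1) (fderiv ℝ u x w)
        + (fderiv ℝ (fun z => F (p.1, z)) p.2) (fderiv ℝ v x w)‖
      ≤ ‖(fderiv ℝ (fun y => F (y, p.2)) p.1) (fderiv ℝ u x w)‖
        + ‖(fderiv ℝ (fun z => F (p.1, z)) p.2) (fderiv ℝ v x w)‖ := norm_add_le _ _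
    _ ≤ C1 * ‖fderiv ℝ u x w‖ + C2 * ‖fderiv ℝ v x w‖ := by
        gcongr
        · exact (fderiv ℝ (fun y => F (y, p.2)) p.1).le_of_opNorm_le (h1 p) _
        · exact (fderiv ℝ (fun z => F (p.1, z)) p.2).le_of_opNorm_le (h2 p) _
    _ ≤ C1 * (‖fderiv ℝ u x‖ * ‖w‖) + C2 * (‖fderiv ℝ v x‖ * ‖w‖) := by
        gcongr
        · exact (fderiv ℝ u x).le_opNorm w
        · exact (fderiv ℝ v x).le_opNorm w
    _ = (C1 * ‖fderiv ℝ u x‖ + C2 * ‖fderiv ℝ v x‖) * ‖w‖ := by ring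

/-- **Pathwise action-derivative growth bound.** Under the model rollout setup, every
`â_i : Θ → A` is differentiable with
`‖D_θ â_i(θ)‖ ≤ L_π L_f̂ L_θ ∑_{j<i} M^j + L_θ`, `M = L_f̂ (1 + L_π)`; consequently
`‖D_θ ŝ_i(θ)‖ + ‖D_θ â_i(θ)‖ ≤ K̂(i)`. -/
theorem stmt4 {Θ S A : Type*}
    [NormedAddCommGroup Θ] [NormedSpace ℝ Θ]
    [NormedAddCommGroup S] [NormedSpace ℝ S]
    [NormedAddCommGroup A] [NormedSpace ℝ A]
    (π : Θ × S → A) (f : S × A → S) (s₀ : S)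
    (Lθ Lπ Lf : ℝ)
    (hπdiff : Differentiable ℝ π)
    (hπθ : ∀ p : Θ × S, ‖fderiv ℝ (fun θ : Θ => π (θ, p.2)) p.1‖ ≤ Lθ)
    (hπs : ∀ p : Θ × S, ‖fderiv ℝ (fun s : S => π (p.1, s)) p.2‖ ≤ Lπ)
    (hfdiff : Differentiable ℝ f)
    (hfs : ∀ p : S × A, ‖fderiv ℝ (fun s : S => f (s, p.2)) p.1‖ ≤ Lf)
    (hfa : ∀ p : S × A, ‖fderiv ℝ (fun a : A => f (p.1, a)) p.2‖ ≤ Lf) :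
    ∀ (i : ℕ) (θ : Θ),
      DifferentiableAt ℝ (aHat π f s₀ i) θ ∧
        ‖fderiv ℝ (aHat π f s₀ i) θ‖ ≤
          Lπ * Lf * Lθ * ∑ j ∈ Finset.range i, (Lf * (1 + Lπ)) ^ j + Lθ ∧
        ‖fderiv ℝ (sHat π f s₀ i) θ‖ + ‖fderiv ℝ (aHat π f s₀ i) θ‖ ≤
          Khat Lπ Lf Lθ i := by
  intro i θ
  have hLθ : 0 ≤ Lθ := le_trans (norm_nonneg _) (hπθ (θ, s₀))
  have hLπ : 0 ≤ Lπ := le_trans (norm_nonneg _) (hπs (θ, s₀))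
  have hLf : 0 ≤ Lf := le_trans (norm_nonneg _) (hfs (s₀, π (θ, s₀)))
  have hid : ‖fderiv ℝ (fun x : Θ => x) θ‖ ≤ 1 := by
    rw [fderiv_id']; exact ContinuousLinearMap.norm_id_le
  -- key induction: bound on state derivative
  have key : ∀ n : ℕ, DifferentiableAt ℝ (sHat π f s₀ n) θ ∧
      ‖fderiv ℝ (sHat π f s₀ n) θ‖ ≤
        Lf * Lθ * ∑ j ∈ Finset.range n, (Lf * (1 + Lπ)) ^ j := by
    intro n
    induction n with
    | zero =>
      refine ⟨differentiableAt_const _, ?_⟩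
      have : sHat π f s₀ 0 = fun _ : Θ => s₀ := rfl
      rw [this, fderiv_fun_const]
      simp
    | succ n ih =>
      obtain ⟨hd, hb⟩ := ih
      have ha := comp2 π hπdiff (fun x => x) (sHat π f s₀ n) θ
        differentiableAt_fun_id hd Lθ Lπ hπθ hπs
      have hsumnn : 0 ≤ ∑ j ∈ Finset.range n, (Lf * (1 + Lπ)) ^ j :=
        Finset.sum_nonneg fun j _ => pow_nonneg (by positivity) j
      have ha1 : DifferentiableAt ℝ (aHat π f s₀ n) θ := ha.1
      have ha2 : ‖fderiv ℝ (aHat π f s₀ n) θ‖ ≤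
          Lθ * ‖fderiv ℝ (fun x : Θ => x) θ‖ + Lπ * ‖fderiv ℝ (sHat π f s₀ n) θ‖ := ha.2
      have hab : ‖fderiv ℝ (aHat π f s₀ n) θ‖ ≤
          Lπ * (Lf * Lθ * ∑ j ∈ Finset.range n, (Lf * (1 + Lπ)) ^ j) + Lθ := by
        nlinarith [ha2, hb]
      have hs := comp2 f hfdiff (sHat π f s₀ n) (aHat π f s₀ n) θ hd ha1 Lf Lf hfs hfa
      have hs1 : DifferentiableAt ℝ (sHat π f s₀ (n+1)) θ := hs.1
      refine ⟨hs1, ?_⟩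
      have hb2 : ‖fderiv ℝ (sHat π f s₀ (n+1)) θ‖ ≤
          Lf * ‖fderiv ℝ (sHat π f s₀ n) θ‖ + Lf * ‖fderiv ℝ (aHat π f s₀ n) θ‖ := hs.2
      rw [geom_sum_succ]
      nlinarith [hb2, mul_le_mul_of_nonneg_left hb hLf, mul_le_mul_of_nonneg_left hab hLf]
  obtain ⟨hd, hb⟩ := key i
  have ha := comp2 π hπdiff (fun x => x) (sHat π f s₀ i) θ differentiableAt_fun_id hd Lθ Lπ hπθ hπs
  have hsumnn : 0 ≤ ∑ j ∈ Finset.range i, (Lf * (1 + Lπ)) ^ j :=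
    Finset.sum_nonneg fun j _ => pow_nonneg (by positivity) j
  have ha1 : DifferentiableAt ℝ (aHat π f s₀ i) θ := ha.1
  have ha2 : ‖fderiv ℝ (aHat π f s₀ i) θ‖ ≤
      Lθ * ‖fderiv ℝ (fun x : Θ => x) θ‖ + Lπ * ‖fderiv ℝ (sHat π f s₀ i) θ‖ := ha.2
  refine ⟨ha1, ?_, ?_⟩
  · nlinarith [ha2, hb]
  · unfold Khat
    nlinarith [ha2, hb, norm_nonneg (fderiv ℝ (sHat π f s₀ i) θ)]
end

section
/- Under the model rollout setup, consider a second model rollout (s̄_i, ā_i) generated by the same policy π and model f̂ from a (possibly different) constant initial state s̄₀ ∈ S. Then for every i ≥ 1 and every θ ∈ Θ, ‖D_θ ŝ_i(θ) − D_θ s̄_i(θ)‖ ≤ ( 2M·K̂(i−1) + 2·L_f̂·L_θ ) · ∑_{j=0}^{i−1} M^j, where M = L_f̂·(1 + L_π) and K̂(i) = (1 + L_π)·L_f̂·L_θ·∑_{j=0}^{i−1} M^j + L_θ. -/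
open Finset

set_option maxHeartbeats 1000000
section Aux
open ContinuousLinearMap
variable {E F G H : Type*}
  [NormedAddCommGroup E] [NormedSpace ℝ E]
  [NormedAddCommGroup F] [NormedSpace ℝ F]
  [NormedAddCommGroup G] [NormedSpace ℝ G]
  [NormedAddCommGroup H] [NormedSpace ℝ H]

lemma partial_fst (f : F × G → H) (hf : Differentiable ℝ f) (b : F) (c : G) :
    fderiv ℝ (fun s : F => f (s, c)) b = (fderiv ℝ f (b, c)).comp (inl ℝ F G) :=
  ((hf (b, c)).hasFDerivAt.comp b (hasFDerivAt_prodMk_left b c)).fderiv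

lemma partial_snd (f : F × G → H) (hf : Differentiable ℝ f) (b : F) (c : G) :
    fderiv ℝ (fun a : G => f (b, a)) c = (fderiv ℝ f (b, c)).comp (inr ℝ F G) :=
  ((hf (b, c)).hasFDerivAt.comp c (hasFDerivAt_prodMk_right b c)).fderiv

lemma key (f : F × G → H) (hf : Differentiable ℝ f) {g : E → F} {h : E → G} {x : E}
    (hg : DifferentiableAt ℝ g x) (hh : DifferentiableAt ℝ h x) :
    fderiv ℝ (fun x => f (g x, h x)) x =
      ((fderiv ℝ f (g x, h x)).comp (inl ℝ F G)).comp (fderiv ℝ g x)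
      + ((fderiv ℝ f (g x, h x)).comp (inr ℝ F G)).comp (fderiv ℝ h x) := by
  have := ((hf (g x, h x)).hasFDerivAt.comp x (hg.hasFDerivAt.prodMk hh.hasFDerivAt)).fderiv
  simp only [Function.comp_def] at this
  rw [this]
  ext y
  simp only [comp_apply, add_apply, ContinuousLinearMap.prod_apply, inl_apply, inr_apply]
  rw [← map_add]
  simp

lemma key_diff (f : F × G → H) (hf : Differentiable ℝ f) {g : E → F} {h : E → G} {x : E}
    (hg : DifferentiableAt ℝ g x) (hh : DifferentiableAt ℝ h x) :
    DifferentiableAt ℝ (fun x => f (g x, h x)) x :=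
  (hf (g x, h x)).comp x (hg.prodMk hh)

end Aux

open ContinuousLinearMap in
lemma mainBound {Θ S A : Type*}
    [NormedAddCommGroup Θ] [NormedSpace ℝ Θ]
    [NormedAddCommGroup S] [NormedSpace ℝ S]
    [NormedAddCommGroup A] [NormedSpace ℝ A]
    (π : Θ × S → A) (f : S × A → S) (s₀ : S)
    (Lθ Lπ Lf : ℝ)
    (hπdiff : Differentiable ℝ π)
    (hπθ : ∀ p : Θ × S, ‖fderiv ℝ (fun θ : Θ => π (θ, p.2)) p.1‖ ≤ Lθ)
    (hπs : ∀ p : Θ × S, ‖fderiv ℝ (fun s : S => π (p.1, s)) p.2‖ ≤ Lπ)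
    (hfdiff : Differentiable ℝ f)
    (hfs : ∀ p : S × A, ‖fderiv ℝ (fun s : S => f (s, p.2)) p.1‖ ≤ Lf)
    (hfa : ∀ p : S × A, ‖fderiv ℝ (fun a : A => f (p.1, a)) p.2‖ ≤ Lf) :
    ∀ i : ℕ, Differentiable ℝ (sHat π f s₀ i) ∧ ∀ θ : Θ,
      ‖fderiv ℝ (sHat π f s₀ i) θ‖ ≤
        Lf * Lθ * ∑ j ∈ Finset.range i, (Lf * (1 + Lπ)) ^ j := by
  have hLθ : 0 ≤ Lθ := le_trans (norm_nonneg _) (hπθ (0, 0))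
  have hLπ : 0 ≤ Lπ := le_trans (norm_nonneg _) (hπs (0, 0))
  have hLf : 0 ≤ Lf := le_trans (norm_nonneg _) (hfs (0, 0))
  intro i
  induction i with
  | zero =>
    constructor
    · exact differentiable_const _
    · intro θ; simp [sHat, fderiv_const]
  | succ i ih =>
    obtain ⟨hdiff, hbd⟩ := ih
    set M : ℝ := Lf * (1 + Lπ) with hM
    have hMnn : 0 ≤ M := by positivity
    -- the action map
    have haDiff : Differentiable ℝ (fun θ : Θ => π (θ, sHat π f s₀ i θ)) := fun θ =>
      key_diff π hπdiff (differentiableAt_fun_id) (hdiff θ)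
    have haBd : ∀ θ : Θ, ‖fderiv ℝ (fun θ : Θ => π (θ, sHat π f s₀ i θ)) θ‖ ≤
        Lθ + Lπ * ‖fderiv ℝ (sHat π f s₀ i) θ‖ := by
      intro θ
      rw [key π hπdiff (differentiableAt_fun_id) (hdiff θ)]
      refine le_trans (norm_add_le _ _) ?_
      have h1 : ‖((fderiv ℝ π (θ, sHat π f s₀ i θ)).comp (inl ℝ Θ S)).comp
          (fderiv ℝ (fun x : Θ => x) θ)‖ ≤ Lθ := by
        rw [fderiv_id', ContinuousLinearMap.comp_id,
          ← partial_fst π hπdiff θ (sHat π f s₀ i θ)]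
        exact hπθ (θ, sHat π f s₀ i θ)
      have h2 : ‖((fderiv ℝ π (θ, sHat π f s₀ i θ)).comp (inr ℝ Θ S)).comp
          (fderiv ℝ (sHat π f s₀ i) θ)‖ ≤ Lπ * ‖fderiv ℝ (sHat π f s₀ i) θ‖ := by
        refine le_trans (opNorm_comp_le _ _) ?_
        refine mul_le_mul_of_nonneg_right ?_ (norm_nonneg _)
        rw [← partial_snd π hπdiff θ (sHat π f s₀ i θ)]
        exact hπs (θ, sHat π f s₀ i θ)
      linarith
    constructor
    · intro θ
      exact key_diff f hfdiff (hdiff θ) (haDiff θ)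
    · intro θ
      have heq : (sHat π f s₀ (i + 1)) =
          fun θ => f (sHat π f s₀ i θ, π (θ, sHat π f s₀ i θ)) := rfl
      rw [heq, key f hfdiff (hdiff θ) (haDiff θ)]
      set D := fderiv ℝ (sHat π f s₀ i) θ
      set Da := fderiv ℝ (fun θ : Θ => π (θ, sHat π f s₀ i θ)) θ
      have h1 : ‖((fderiv ℝ f (sHat π f s₀ i θ, π (θ, sHat π f s₀ i θ))).comp
          (inl ℝ S A)).comp D‖ ≤ Lf * ‖D‖ := by
        refine le_trans (opNorm_comp_le _ _) ?_
        refine mul_le_mul_of_nonneg_right ?_ (norm_nonneg _)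
        rw [← partial_fst f hfdiff (sHat π f s₀ i θ) (π (θ, sHat π f s₀ i θ))]
        exact hfs (sHat π f s₀ i θ, π (θ, sHat π f s₀ i θ))
      have h2 : ‖((fderiv ℝ f (sHat π f s₀ i θ, π (θ, sHat π f s₀ i θ))).comp
          (inr ℝ S A)).comp Da‖ ≤ Lf * ‖Da‖ := by
        refine le_trans (opNorm_comp_le _ _) ?_
        refine mul_le_mul_of_nonneg_right ?_ (norm_nonneg _)
        rw [← partial_snd f hfdiff (sHat π f s₀ i θ) (π (θ, sHat π f s₀ i θ))]
        exact hfa (sHat π f s₀ i θ, π (θ, sHat π f s₀ i θ))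
      have hDa := haBd θ
      have hD := hbd θ
      have hsum : ∑ j ∈ Finset.range (i + 1), M ^ j
          = M * ∑ j ∈ Finset.range i, M ^ j + 1 := by
        rw [Finset.sum_range_succ']
        simp [pow_succ, Finset.mul_sum, mul_comm]
      refine le_trans (norm_add_le _ _) ?_
      rw [hsum]
      have hDnn : 0 ≤ ‖D‖ := norm_nonneg _
      nlinarith [mul_le_mul_of_nonneg_left hD hMnn]


/-- **Stability of pathwise state derivatives w.r.t. the initial condition** (Lemma B.2,
state part). Two model rollouts with the same policy and model started from `s₀` and
`s̄₀` satisfy, for `i ≥ 1`,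
`‖D_θ ŝ_i(θ) − D_θ s̄_i(θ)‖ ≤ (2 M K̂(i−1) + 2 L_f̂ L_θ) ∑_{j<i} M^j`,
`M = L_f̂ (1 + L_π)`. -/
theorem stmt5 {Θ S A : Type*}
    [NormedAddCommGroup Θ] [NormedSpace ℝ Θ]
    [NormedAddCommGroup S] [NormedSpace ℝ S]
    [NormedAddCommGroup A] [NormedSpace ℝ A]
    (π : Θ × S → A) (f : S × A → S) (s₀ sbar₀ : S)
    (Lθ Lπ Lf : ℝ)
    (hπdiff : Differentiable ℝ π)
    (hπθ : ∀ p : Θ × S, ‖fderiv ℝ (fun θ : Θ => π (θ, p.2)) p.1‖ ≤ Lθ)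
    (hπs : ∀ p : Θ × S, ‖fderiv ℝ (fun s : S => π (p.1, s)) p.2‖ ≤ Lπ)
    (hfdiff : Differentiable ℝ f)
    (hfs : ∀ p : S × A, ‖fderiv ℝ (fun s : S => f (s, p.2)) p.1‖ ≤ Lf)
    (hfa : ∀ p : S × A, ‖fderiv ℝ (fun a : A => f (p.1, a)) p.2‖ ≤ Lf) :
    ∀ i : ℕ, 1 ≤ i → ∀ θ : Θ,
      ‖fderiv ℝ (sHat π f s₀ i) θ - fderiv ℝ (sHat π f sbar₀ i) θ‖ ≤
        (2 * (Lf * (1 + Lπ)) * Khat Lπ Lf Lθ (i - 1) + 2 * Lf * Lθ) *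
          ∑ j ∈ Finset.range i, (Lf * (1 + Lπ)) ^ j := by
  have hLθ : 0 ≤ Lθ := le_trans (norm_nonneg _) (hπθ (0, 0))
  have hLπ : 0 ≤ Lπ := le_trans (norm_nonneg _) (hπs (0, 0))
  have hLf : 0 ≤ Lf := le_trans (norm_nonneg _) (hfs (0, 0))
  have hMnn : 0 ≤ Lf * (1 + Lπ) := by positivity
  intro i hi θ
  have h1 := (mainBound π f s₀ Lθ Lπ Lf hπdiff hπθ hπs hfdiff hfs hfa i).2 θ
  have h2 := (mainBound π f sbar₀ Lθ Lπ Lf hπdiff hπθ hπs hfdiff hfs hfa i).2 θ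
  have hsumnn : 0 ≤ ∑ j ∈ Finset.range i, (Lf * (1 + Lπ)) ^ j :=
    Finset.sum_nonneg fun j _ => pow_nonneg hMnn j
  have hsumnn' : 0 ≤ ∑ j ∈ Finset.range (i - 1), (Lf * (1 + Lπ)) ^ j :=
    Finset.sum_nonneg fun j _ => pow_nonneg hMnn j
  have hK : 0 ≤ Khat Lπ Lf Lθ (i - 1) := by
    unfold Khat
    have : 0 ≤ (1 + Lπ) * Lf * Lθ := by positivity
    nlinarith
  have htri := norm_sub_le (fderiv ℝ (sHat π f s₀ i) θ) (fderiv ℝ (sHat π f sbar₀ i) θ)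
  nlinarith [mul_nonneg (mul_nonneg hMnn hK) hsumnn]
end

section
/- Under the model rollout setup, consider a second model rollout (s̄_i, ā_i) generated by the same policy π and model f̂ from a (possibly different) constant initial state s̄₀ ∈ S. Then for every i ≥ 1 and every θ ∈ Θ, ‖D_θ â_i(θ) − D_θ ā_i(θ)‖ ≤ L_π · ( 2M·K̂(i−1) + 2·L_f̂·L_θ ) · ∑_{j=0}^{i−1} M^j + 2·L_π·K̂(i) + 2·L_θ, where M = L_f̂·(1 + L_π) and K̂(i) = (1 + L_π)·L_f̂·L_θ·∑_{j=0}^{i−1} M^j + L_θ. -/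
open Finset

open ContinuousLinearMap in
lemma fderiv_pair_bound {E F G : Type*} [NormedAddCommGroup E] [NormedSpace ℝ E]
    [NormedAddCommGroup F] [NormedSpace ℝ F] [NormedAddCommGroup G] [NormedSpace ℝ G]
    (g : E × F → G) (hg : Differentiable ℝ g) (p : E × F) {La Lb : ℝ}
    (ha : ‖fderiv ℝ (fun x => g (x, p.2)) p.1‖ ≤ La)
    (hb : ‖fderiv ℝ (fun y => g (p.1, y)) p.2‖ ≤ Lb)
    (u : E) (v : F) :
    ‖fderiv ℝ g p (u, v)‖ ≤ La * ‖u‖ + Lb * ‖v‖ := by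
  have h1 : HasFDerivAt (fun x => g (x, p.2))
      ((fderiv ℝ g p).comp (inl ℝ E F)) p.1 :=
    (hg p).hasFDerivAt.comp p.1 (hasFDerivAt_prodMk_left p.1 p.2)
  have h2 : HasFDerivAt (fun y => g (p.1, y))
      ((fderiv ℝ g p).comp (inr ℝ E F)) p.2 :=
    (hg p).hasFDerivAt.comp p.2 (hasFDerivAt_prodMk_right p.1 p.2)
  have e : (u, v) = ((u, 0) : E × F) + (0, v) := by simp
  rw [e, map_add]
  calc ‖fderiv ℝ g p (u, 0) + fderiv ℝ g p (0, v)‖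
      ≤ ‖fderiv ℝ g p (u, 0)‖ + ‖fderiv ℝ g p (0, v)‖ := norm_add_le _ _
    _ ≤ La * ‖u‖ + Lb * ‖v‖ := by
        gcongr ?_ + ?_
        · have : fderiv ℝ g p (u, 0) = fderiv ℝ (fun x => g (x, p.2)) p.1 u := by
            rw [h1.fderiv]; rfl
          rw [this]
          exact le_trans ((fderiv ℝ (fun x => g (x, p.2)) p.1).le_opNorm u)
            (mul_le_mul_of_nonneg_right ha (norm_nonneg u))
        · have : fderiv ℝ g p (0, v) = fderiv ℝ (fun y => g (p.1, y)) p.2 v := by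
            rw [h2.fderiv]; rfl
          rw [this]
          exact le_trans ((fderiv ℝ (fun y => g (p.1, y)) p.2).le_opNorm v)
            (mul_le_mul_of_nonneg_right hb (norm_nonneg v))

section rollout
variable {Θ S A : Type*}
    [NormedAddCommGroup Θ] [NormedSpace ℝ Θ]
    [NormedAddCommGroup S] [NormedSpace ℝ S]
    [NormedAddCommGroup A] [NormedSpace ℝ A]
    (π : Θ × S → A) (f : S × A → S) (s₀ : S)
    (Lθ Lπ Lf : ℝ)
    (hπdiff : Differentiable ℝ π)
    (hπθ : ∀ p : Θ × S, ‖fderiv ℝ (fun θ : Θ => π (θ, p.2)) p.1‖ ≤ Lθ)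
    (hπs : ∀ p : Θ × S, ‖fderiv ℝ (fun s : S => π (p.1, s)) p.2‖ ≤ Lπ)
    (hfdiff : Differentiable ℝ f)
    (hfs : ∀ p : S × A, ‖fderiv ℝ (fun s : S => f (s, p.2)) p.1‖ ≤ Lf)
    (hfa : ∀ p : S × A, ‖fderiv ℝ (fun a : A => f (p.1, a)) p.2‖ ≤ Lf)

include hπdiff hπθ hπs hfdiff hfs hfa in
lemma rollout_bounds : ∀ i : ℕ, Differentiable ℝ (sHat π f s₀ i) ∧
    ∀ θ : Θ, ‖fderiv ℝ (sHat π f s₀ i) θ‖ ≤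
      Lf * Lθ * ∑ j ∈ Finset.range i, (Lf * (1 + Lπ)) ^ j := by
  have hLθ : 0 ≤ Lθ := le_trans (norm_nonneg _) (hπθ (0, 0))
  have hLπ : 0 ≤ Lπ := le_trans (norm_nonneg _) (hπs (0, 0))
  have hLf : 0 ≤ Lf := le_trans (norm_nonneg _) (hfs (0, 0))
  intro i
  induction i with
  | zero =>
    constructor
    · exact differentiable_const s₀
    · intro θ
      simp [sHat, fderiv_const]
  | succ i ih =>
    obtain ⟨hdiff, hbound⟩ := ih
    have hadiff : Differentiable ℝ (fun θ : Θ => π (θ, sHat π f s₀ i θ)) :=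
      hπdiff.comp (differentiable_id.prodMk hdiff)
    have hpairdiff : Differentiable ℝ
        (fun θ : Θ => (sHat π f s₀ i θ, π (θ, sHat π f s₀ i θ))) :=
      hdiff.prodMk hadiff
    have hsdiff : Differentiable ℝ (sHat π f s₀ (i + 1)) := by
      show Differentiable ℝ (fun θ => f (sHat π f s₀ i θ, π (θ, sHat π f s₀ i θ)))
      exact hfdiff.comp hpairdiff
    refine ⟨hsdiff, fun θ => ?_⟩
    set Bi := Lf * Lθ * ∑ j ∈ Finset.range i, (Lf * (1 + Lπ)) ^ j with hBi
    have hBi0 : 0 ≤ Bi := by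
      apply mul_nonneg (mul_nonneg hLf hLθ)
      apply Finset.sum_nonneg
      intro j _
      positivity
    have haction : ∀ w : Θ, ‖fderiv ℝ (fun θ : Θ => π (θ, sHat π f s₀ i θ)) θ w‖ ≤
        (Lθ + Lπ * Bi) * ‖w‖ := by
      intro w
      have hcomp : HasFDerivAt (fun θ : Θ => π (θ, sHat π f s₀ i θ))
          ((fderiv ℝ π (θ, sHat π f s₀ i θ)).comp
            ((ContinuousLinearMap.id ℝ Θ).prod (fderiv ℝ (sHat π f s₀ i) θ))) θ :=
        (hπdiff _).hasFDerivAt.comp θ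
          ((hasFDerivAt_id θ).prodMk (hdiff θ).hasFDerivAt)
      rw [hcomp.fderiv]
      have : ((fderiv ℝ π (θ, sHat π f s₀ i θ)).comp
            ((ContinuousLinearMap.id ℝ Θ).prod (fderiv ℝ (sHat π f s₀ i) θ))) w
          = fderiv ℝ π (θ, sHat π f s₀ i θ) (w, fderiv ℝ (sHat π f s₀ i) θ w) := rfl
      rw [this]
      calc ‖fderiv ℝ π (θ, sHat π f s₀ i θ) (w, fderiv ℝ (sHat π f s₀ i) θ w)‖
          ≤ Lθ * ‖w‖ + Lπ * ‖fderiv ℝ (sHat π f s₀ i) θ w‖ :=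
            fderiv_pair_bound π hπdiff _ (hπθ _) (hπs _) _ _
        _ ≤ Lθ * ‖w‖ + Lπ * (Bi * ‖w‖) := by
            gcongr
            exact le_trans ((fderiv ℝ (sHat π f s₀ i) θ).le_opNorm w)
              (mul_le_mul_of_nonneg_right (hbound θ) (norm_nonneg w))
        _ = (Lθ + Lπ * Bi) * ‖w‖ := by ring
    have hscomp : HasFDerivAt (sHat π f s₀ (i + 1))
        ((fderiv ℝ f (sHat π f s₀ i θ, π (θ, sHat π f s₀ i θ))).comp
          ((fderiv ℝ (sHat π f s₀ i) θ).prod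
            (fderiv ℝ (fun θ : Θ => π (θ, sHat π f s₀ i θ)) θ))) θ :=
      (hfdiff _).hasFDerivAt.comp θ
        (((hdiff θ).hasFDerivAt).prodMk (hadiff θ).hasFDerivAt)
    rw [hscomp.fderiv]
    apply ContinuousLinearMap.opNorm_le_bound
    · have hsum : (0:ℝ) ≤ ∑ j ∈ Finset.range (i+1), (Lf * (1 + Lπ)) ^ j := by
        apply Finset.sum_nonneg; intro j _; positivity
      positivity
    intro w
    have happ : ((fderiv ℝ f (sHat π f s₀ i θ, π (θ, sHat π f s₀ i θ))).comp
          ((fderiv ℝ (sHat π f s₀ i) θ).prod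
            (fderiv ℝ (fun θ : Θ => π (θ, sHat π f s₀ i θ)) θ))) w
        = fderiv ℝ f (sHat π f s₀ i θ, π (θ, sHat π f s₀ i θ))
            (fderiv ℝ (sHat π f s₀ i) θ w,
             fderiv ℝ (fun θ : Θ => π (θ, sHat π f s₀ i θ)) θ w) := rfl
    rw [happ]
    calc ‖fderiv ℝ f (sHat π f s₀ i θ, π (θ, sHat π f s₀ i θ))
            (fderiv ℝ (sHat π f s₀ i) θ w,
             fderiv ℝ (fun θ : Θ => π (θ, sHat π f s₀ i θ)) θ w)‖
        ≤ Lf * ‖fderiv ℝ (sHat π f s₀ i) θ w‖ +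
          Lf * ‖fderiv ℝ (fun θ : Θ => π (θ, sHat π f s₀ i θ)) θ w‖ :=
          fderiv_pair_bound f hfdiff _ (hfs _) (hfa _) _ _
      _ ≤ Lf * (Bi * ‖w‖) + Lf * ((Lθ + Lπ * Bi) * ‖w‖) := by
          gcongr
          · exact le_trans ((fderiv ℝ (sHat π f s₀ i) θ).le_opNorm w)
              (mul_le_mul_of_nonneg_right (hbound θ) (norm_nonneg w))
          · exact haction w
      _ ≤ Lf * Lθ * (∑ j ∈ Finset.range (i+1), (Lf * (1 + Lπ)) ^ j) * ‖w‖ := by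
          rw [geom_sum_succ]
          have : Lf * (Bi * ‖w‖) + Lf * ((Lθ + Lπ * Bi) * ‖w‖)
              = (Lf * (1 + Lπ) * Bi + Lf * Lθ) * ‖w‖ := by ring
          rw [this]
          apply mul_le_mul_of_nonneg_right _ (norm_nonneg w)
          rw [hBi]
          apply le_of_eq
          ring

include hπdiff hπθ hπs hfdiff hfs hfa in
lemma aHat_bound (i : ℕ) (θ : Θ) : ‖fderiv ℝ (aHat π f s₀ i) θ‖ ≤
    Lθ + Lπ * (Lf * Lθ * ∑ j ∈ Finset.range i, (Lf * (1 + Lπ)) ^ j) := by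
  have hLθ : 0 ≤ Lθ := le_trans (norm_nonneg _) (hπθ (0, 0))
  have hLπ : 0 ≤ Lπ := le_trans (norm_nonneg _) (hπs (0, 0))
  have hLf : 0 ≤ Lf := le_trans (norm_nonneg _) (hfs (0, 0))
  obtain ⟨hdiff, hbound⟩ := rollout_bounds π f s₀ Lθ Lπ Lf hπdiff hπθ hπs hfdiff hfs hfa i
  set Bi := Lf * Lθ * ∑ j ∈ Finset.range i, (Lf * (1 + Lπ)) ^ j with hBi
  have hBi0 : 0 ≤ Bi := by
    apply mul_nonneg (mul_nonneg hLf hLθ)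
    apply Finset.sum_nonneg; intro j _; positivity
  have hcomp : HasFDerivAt (aHat π f s₀ i)
      ((fderiv ℝ π (θ, sHat π f s₀ i θ)).comp
        ((ContinuousLinearMap.id ℝ Θ).prod (fderiv ℝ (sHat π f s₀ i) θ))) θ :=
    (hπdiff _).hasFDerivAt.comp θ
      ((hasFDerivAt_id θ).prodMk (hdiff θ).hasFDerivAt)
  rw [hcomp.fderiv]
  apply ContinuousLinearMap.opNorm_le_bound _ (by positivity)
  intro w
  have happ : ((fderiv ℝ π (θ, sHat π f s₀ i θ)).comp
        ((ContinuousLinearMap.id ℝ Θ).prod (fderiv ℝ (sHat π f s₀ i) θ))) w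
      = fderiv ℝ π (θ, sHat π f s₀ i θ) (w, fderiv ℝ (sHat π f s₀ i) θ w) := rfl
  rw [happ]
  calc ‖fderiv ℝ π (θ, sHat π f s₀ i θ) (w, fderiv ℝ (sHat π f s₀ i) θ w)‖
      ≤ Lθ * ‖w‖ + Lπ * ‖fderiv ℝ (sHat π f s₀ i) θ w‖ :=
        fderiv_pair_bound π hπdiff _ (hπθ _) (hπs _) _ _
    _ ≤ Lθ * ‖w‖ + Lπ * (Bi * ‖w‖) := by
        gcongr
        exact le_trans ((fderiv ℝ (sHat π f s₀ i) θ).le_opNorm w)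
          (mul_le_mul_of_nonneg_right (hbound θ) (norm_nonneg w))
    _ = (Lθ + Lπ * Bi) * ‖w‖ := by ring

end rollout

lemma Khat_nonneg {Lπ Lf Lθ : ℝ} (hLπ : 0 ≤ Lπ) (hLf : 0 ≤ Lf) (hLθ : 0 ≤ Lθ) (i : ℕ) :
    0 ≤ Khat Lπ Lf Lθ i := by
  unfold Khat
  have hsum : (0:ℝ) ≤ ∑ j ∈ Finset.range i, (Lf * (1 + Lπ)) ^ j := by
    apply Finset.sum_nonneg; intro j _; positivity
  positivity

/-- **Stability of pathwise action derivatives w.r.t. the initial condition** (Lemma B.2,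
action part). Two model rollouts with the same policy and model started from `s₀` and
`s̄₀` satisfy, for `i ≥ 1`,
`‖D_θ â_i(θ) − D_θ ā_i(θ)‖ ≤ L_π (2 M K̂(i−1) + 2 L_f̂ L_θ) ∑_{j<i} M^j
  + 2 L_π K̂(i) + 2 L_θ`, `M = L_f̂ (1 + L_π)`. -/
theorem stmt6 {Θ S A : Type*}
    [NormedAddCommGroup Θ] [NormedSpace ℝ Θ]
    [NormedAddCommGroup S] [NormedSpace ℝ S]
    [NormedAddCommGroup A] [NormedSpace ℝ A]
    (π : Θ × S → A) (f : S × A → S) (s₀ sbar₀ : S)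
    (Lθ Lπ Lf : ℝ)
    (hπdiff : Differentiable ℝ π)
    (hπθ : ∀ p : Θ × S, ‖fderiv ℝ (fun θ : Θ => π (θ, p.2)) p.1‖ ≤ Lθ)
    (hπs : ∀ p : Θ × S, ‖fderiv ℝ (fun s : S => π (p.1, s)) p.2‖ ≤ Lπ)
    (hfdiff : Differentiable ℝ f)
    (hfs : ∀ p : S × A, ‖fderiv ℝ (fun s : S => f (s, p.2)) p.1‖ ≤ Lf)
    (hfa : ∀ p : S × A, ‖fderiv ℝ (fun a : A => f (p.1, a)) p.2‖ ≤ Lf) :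
    ∀ i : ℕ, 1 ≤ i → ∀ θ : Θ,
      ‖fderiv ℝ (aHat π f s₀ i) θ - fderiv ℝ (aHat π f sbar₀ i) θ‖ ≤
        Lπ * ((2 * (Lf * (1 + Lπ)) * Khat Lπ Lf Lθ (i - 1) + 2 * Lf * Lθ) *
            ∑ j ∈ Finset.range i, (Lf * (1 + Lπ)) ^ j) +
          2 * Lπ * Khat Lπ Lf Lθ i + 2 * Lθ := by
  intro i _ θ
  have hLθ : 0 ≤ Lθ := le_trans (norm_nonneg _) (hπθ (0, 0))
  have hLπ : 0 ≤ Lπ := le_trans (norm_nonneg _) (hπs (0, 0))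
  have hLf : 0 ≤ Lf := le_trans (norm_nonneg _) (hfs (0, 0))
  set Si := ∑ j ∈ Finset.range i, (Lf * (1 + Lπ)) ^ j with hSi
  have hSi0 : 0 ≤ Si := by
    apply Finset.sum_nonneg; intro j _; positivity
  have h1 := aHat_bound π f s₀ Lθ Lπ Lf hπdiff hπθ hπs hfdiff hfs hfa i θ
  have h2 := aHat_bound π f sbar₀ Lθ Lπ Lf hπdiff hπθ hπs hfdiff hfs hfa i θ
  have htri : ‖fderiv ℝ (aHat π f s₀ i) θ - fderiv ℝ (aHat π f sbar₀ i) θ‖ ≤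
      2 * (Lθ + Lπ * (Lf * Lθ * Si)) := by
    calc ‖fderiv ℝ (aHat π f s₀ i) θ - fderiv ℝ (aHat π f sbar₀ i) θ‖
        ≤ ‖fderiv ℝ (aHat π f s₀ i) θ‖ + ‖fderiv ℝ (aHat π f sbar₀ i) θ‖ :=
          norm_sub_le _ _
      _ ≤ 2 * (Lθ + Lπ * (Lf * Lθ * Si)) := by rw [hSi]; linarith
  refine le_trans htri ?_
  have hK1 : 0 ≤ Khat Lπ Lf Lθ (i - 1) := Khat_nonneg hLπ hLf hLθ _
  have hKi : 0 ≤ Khat Lπ Lf Lθ i := Khat_nonneg hLπ hLf hLθ _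
  have hM : (0:ℝ) ≤ Lf * (1 + Lπ) := by positivity
  nlinarith [mul_nonneg (mul_nonneg (mul_nonneg hLπ hM) hK1) hSi0,
    mul_nonneg hLπ hKi]
end

section
/- Under the model rollout setup, let f : S × A → S be a differentiable ‘true dynamics’ map with ‖D_s f(s,a)‖ ≤ L_f and ‖D_a f(s,a)‖ ≤ L_f for all (s,a), and let (s_i, a_i) be the rollout generated from the same constant initial state s₀ and the same policy π, but with f in place of f̂. Suppose ε_f ≥ 0 satisfies, for every i ≥ 1 and every θ, ‖D_s f̂(ŝ_{i−1}(θ), â_{i−1}(θ)) − D_s f(s_{i−1}(θ), a_{i−1}(θ))‖ + ‖D_a f̂(ŝ_{i−1}(θ), â_{i−1}(θ)) − D_a f(s_{i−1}(θ), a_{i−1}(θ))‖ ≤ ε_f. Then for every i ≥ 1 and θ, ‖D_θ ŝ_i(θ) − D_θ s_i(θ)‖ ≤ ( (ε_f + 2·L_f·L_π)·K̂(i−1) + 2·L_f·L_θ ) · ∑_{j=0}^{i−1} M_f^j, where M_f = L_f·(1 + L_π) and K̂(i) = (1 + L_π)·L_f̂·L_θ·∑_{j=0}^{i−1} (L_f̂(1+L_π))^j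 + L_θ. -/
open Finset

section Aux
variable {Θ S A : Type*}
    [NormedAddCommGroup Θ] [NormedSpace ℝ Θ]
    [NormedAddCommGroup S] [NormedSpace ℝ S]
    [NormedAddCommGroup A] [NormedSpace ℝ A]
    (π : Θ × S → A) (g : S × A → S) (s₀ : S)

open ContinuousLinearMap in
lemma hasFDerivAt_comp2 {B : Type*} [NormedAddCommGroup B] [NormedSpace ℝ B]
    (f : S × A → B) (hf : Differentiable ℝ f)
    {g : Θ → S} {h : Θ → A} {θ : Θ} {Dg : Θ →L[ℝ] S} {Dh : Θ →L[ℝ] A}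
    (hg : HasFDerivAt g Dg θ) (hh : HasFDerivAt h Dh θ) :
    HasFDerivAt (fun θ => f (g θ, h θ))
      ((fderiv ℝ (fun s => f (s, h θ)) (g θ)).comp Dg +
       (fderiv ℝ (fun a => f (g θ, a)) (h θ)).comp Dh) θ := by
  have hs : HasFDerivAt (fun s => f (s, h θ))
      ((fderiv ℝ f (g θ, h θ)).comp (inl ℝ S A)) (g θ) :=
    ((hf _).hasFDerivAt).comp (g θ) (hasFDerivAt_prodMk_left (g θ) (h θ))
  have ha : HasFDerivAt (fun a => f (g θ, a))
      ((fderiv ℝ f (g θ, h θ)).comp (inr ℝ S A)) (h θ) :=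
    ((hf _).hasFDerivAt).comp (h θ) (hasFDerivAt_prodMk_right (g θ) (h θ))
  have total : HasFDerivAt (fun θ => f (g θ, h θ))
      ((fderiv ℝ f (g θ, h θ)).comp (Dg.prod Dh)) θ :=
    ((hf _).hasFDerivAt).comp θ (hg.prodMk hh)
  rw [hs.fderiv, ha.fderiv]
  convert total using 1
  ext x
  simp only [ContinuousLinearMap.add_apply, ContinuousLinearMap.comp_apply,
    ContinuousLinearMap.prod_apply, ContinuousLinearMap.inl_apply,
    ContinuousLinearMap.inr_apply]
  rw [← map_add]
  simp

variable (hπ : Differentiable ℝ π) (hg : Differentiable ℝ g)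
include hπ hg

lemma sHat_diff : ∀ i, Differentiable ℝ (sHat π g s₀ i) := by
  intro i
  induction i with
  | zero => exact differentiable_const _
  | succ i ih =>
    show Differentiable ℝ fun θ => g (sHat π g s₀ i θ, π (θ, sHat π g s₀ i θ))
    exact hg.comp (ih.prodMk (hπ.comp (differentiable_id.prodMk ih)))

lemma aHat_diff (i : ℕ) : Differentiable ℝ (aHat π g s₀ i) :=
  hπ.comp (differentiable_id.prodMk (sHat_diff π g s₀ hπ hg i))

lemma fderiv_aHat (i : ℕ) (θ : Θ) :
    fderiv ℝ (aHat π g s₀ i) θ =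
      fderiv ℝ (fun t => π (t, sHat π g s₀ i θ)) θ +
      (fderiv ℝ (fun s => π (θ, s)) (sHat π g s₀ i θ)).comp
        (fderiv ℝ (sHat π g s₀ i) θ) := by
  have h := hasFDerivAt_comp2 π hπ (hasFDerivAt_id θ)
    ((sHat_diff π g s₀ hπ hg i θ).hasFDerivAt)
  rw [ContinuousLinearMap.comp_id] at h
  exact h.fderiv

lemma fderiv_sHat_succ (i : ℕ) (θ : Θ) :
    fderiv ℝ (sHat π g s₀ (i + 1)) θ =
      (fderiv ℝ (fun s => g (s, aHat π g s₀ i θ)) (sHat π g s₀ i θ)).comp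
        (fderiv ℝ (sHat π g s₀ i) θ) +
      (fderiv ℝ (fun a => g (sHat π g s₀ i θ, a)) (aHat π g s₀ i θ)).comp
        (fderiv ℝ (aHat π g s₀ i) θ) := by
  have h := hasFDerivAt_comp2 g hg ((sHat_diff π g s₀ hπ hg i θ).hasFDerivAt)
    ((aHat_diff π g s₀ hπ hg i θ).hasFDerivAt)
  exact h.fderiv

end Aux

section Bounds
variable {Θ S A : Type*}
    [NormedAddCommGroup Θ] [NormedSpace ℝ Θ]
    [NormedAddCommGroup S] [NormedSpace ℝ S]
    [NormedAddCommGroup A] [NormedSpace ℝ A]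
    (π : Θ × S → A) (g : S × A → S) (s₀ : S) (Lθ Lπ Lg : ℝ)
    (hπ : Differentiable ℝ π) (hg : Differentiable ℝ g)
    (hπθ : ∀ p : Θ × S, ‖fderiv ℝ (fun θ : Θ => π (θ, p.2)) p.1‖ ≤ Lθ)
    (hπs : ∀ p : Θ × S, ‖fderiv ℝ (fun s : S => π (p.1, s)) p.2‖ ≤ Lπ)
    (hgs : ∀ p : S × A, ‖fderiv ℝ (fun s : S => g (s, p.2)) p.1‖ ≤ Lg)
    (hga : ∀ p : S × A, ‖fderiv ℝ (fun a : A => g (p.1, a)) p.2‖ ≤ Lg)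
include hπ hg hπθ hπs hgs hga

lemma fderiv_sHat_bound :
    ∀ (i : ℕ) (θ : Θ), ‖fderiv ℝ (sHat π g s₀ i) θ‖ ≤
      Lg * Lθ * ∑ j ∈ range i, (Lg * (1 + Lπ)) ^ j := by
  have hLθ : 0 ≤ Lθ := le_trans (norm_nonneg _) (hπθ ((0 : Θ), s₀))
  have hLπ : 0 ≤ Lπ := le_trans (norm_nonneg _) (hπs ((0 : Θ), s₀))
  have hLg : 0 ≤ Lg := le_trans (norm_nonneg _) (hgs (s₀, π (0, s₀)))
  have hM : 0 ≤ Lg * (1 + Lπ) := mul_nonneg hLg (by linarith)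
  intro i
  induction i with
  | zero =>
    intro θ
    show ‖fderiv ℝ (fun _ : Θ => s₀) θ‖ ≤ _
    simp
  | succ i ih =>
    intro θ
    have hS : 0 ≤ ∑ j ∈ range i, (Lg * (1 + Lπ)) ^ j :=
      Finset.sum_nonneg fun j _ => pow_nonneg hM j
    have hB : 0 ≤ Lg * Lθ * ∑ j ∈ range i, (Lg * (1 + Lπ)) ^ j :=
      mul_nonneg (mul_nonneg hLg hLθ) hS
    have hH : ‖fderiv ℝ (aHat π g s₀ i) θ‖ ≤
        Lθ + Lπ * (Lg * Lθ * ∑ j ∈ range i, (Lg * (1 + Lπ)) ^ j) := by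
      rw [fderiv_aHat π g s₀ hπ hg i θ]
      refine le_trans (norm_add_le _ _) ?_
      gcongr
      · exact hπθ (θ, sHat π g s₀ i θ)
      · refine le_trans (ContinuousLinearMap.opNorm_comp_le _ _) ?_
        exact mul_le_mul (hπs (θ, sHat π g s₀ i θ)) (ih θ) (norm_nonneg _) hLπ
    rw [fderiv_sHat_succ π g s₀ hπ hg i θ]
    refine le_trans (norm_add_le _ _) ?_
    have h1 : ‖(fderiv ℝ (fun s => g (s, aHat π g s₀ i θ)) (sHat π g s₀ i θ)).comp
        (fderiv ℝ (sHat π g s₀ i) θ)‖ ≤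
        Lg * (Lg * Lθ * ∑ j ∈ range i, (Lg * (1 + Lπ)) ^ j) :=
      le_trans (ContinuousLinearMap.opNorm_comp_le _ _)
        (mul_le_mul (hgs (sHat π g s₀ i θ, aHat π g s₀ i θ)) (ih θ) (norm_nonneg _) hLg)
    have h2 : ‖(fderiv ℝ (fun a => g (sHat π g s₀ i θ, a)) (aHat π g s₀ i θ)).comp
        (fderiv ℝ (aHat π g s₀ i) θ)‖ ≤
        Lg * (Lθ + Lπ * (Lg * Lθ * ∑ j ∈ range i, (Lg * (1 + Lπ)) ^ j)) :=
      le_trans (ContinuousLinearMap.opNorm_comp_le _ _)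
        (mul_le_mul (hga (sHat π g s₀ i θ, aHat π g s₀ i θ)) hH (norm_nonneg _) hLg)
    refine le_trans (add_le_add h1 h2) ?_
    rw [geom_sum_succ]
    ring_nf
    nlinarith [hS, hLg, hLθ, hLπ]

lemma fderiv_aHat_bound (i : ℕ) (θ : Θ) :
    ‖fderiv ℝ (aHat π g s₀ i) θ‖ ≤
      Lθ + Lπ * (Lg * Lθ * ∑ j ∈ range i, (Lg * (1 + Lπ)) ^ j) := by
  have hLπ : 0 ≤ Lπ := le_trans (norm_nonneg _) (hπs ((0 : Θ), s₀))
  rw [fderiv_aHat π g s₀ hπ hg i θ]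
  refine le_trans (norm_add_le _ _) ?_
  gcongr
  · exact hπθ (θ, sHat π g s₀ i θ)
  · refine le_trans (ContinuousLinearMap.opNorm_comp_le _ _) ?_
    exact mul_le_mul (hπs (θ, sHat π g s₀ i θ))
      (fderiv_sHat_bound π g s₀ Lθ Lπ Lg hπ hg hπθ hπs hgs hga i θ) (norm_nonneg _) hLπ

end Bounds

theorem stmt7' {Θ S A : Type*}
    [NormedAddCommGroup Θ] [NormedSpace ℝ Θ]
    [NormedAddCommGroup S] [NormedSpace ℝ S]
    [NormedAddCommGroup A] [NormedSpace ℝ A]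
    (π : Θ × S → A) (fh f : S × A → S) (s₀ : S)
    (Lθ Lπ Lfh Lf εf : ℝ) (hεf : 0 ≤ εf)
    (hπdiff : Differentiable ℝ π)
    (hπθ : ∀ p : Θ × S, ‖fderiv ℝ (fun θ : Θ => π (θ, p.2)) p.1‖ ≤ Lθ)
    (hπs : ∀ p : Θ × S, ‖fderiv ℝ (fun s : S => π (p.1, s)) p.2‖ ≤ Lπ)
    (hfhdiff : Differentiable ℝ fh)
    (hfhs : ∀ p : S × A, ‖fderiv ℝ (fun s : S => fh (s, p.2)) p.1‖ ≤ Lfh)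
    (hfha : ∀ p : S × A, ‖fderiv ℝ (fun a : A => fh (p.1, a)) p.2‖ ≤ Lfh)
    (hfdiff : Differentiable ℝ f)
    (hfs : ∀ p : S × A, ‖fderiv ℝ (fun s : S => f (s, p.2)) p.1‖ ≤ Lf)
    (hfa : ∀ p : S × A, ‖fderiv ℝ (fun a : A => f (p.1, a)) p.2‖ ≤ Lf)
    (hmodelerr : ∀ i : ℕ, 1 ≤ i → ∀ θ : Θ,
      ‖fderiv ℝ (fun s : S => fh (s, aHat π fh s₀ (i - 1) θ)) (sHat π fh s₀ (i - 1) θ) -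
          fderiv ℝ (fun s : S => f (s, aHat π f s₀ (i - 1) θ)) (sHat π f s₀ (i - 1) θ)‖ +
        ‖fderiv ℝ (fun a : A => fh (sHat π fh s₀ (i - 1) θ, a)) (aHat π fh s₀ (i - 1) θ) -
          fderiv ℝ (fun a : A => f (sHat π f s₀ (i - 1) θ, a)) (aHat π f s₀ (i - 1) θ)‖ ≤
        εf) :
    ∀ i : ℕ, 1 ≤ i → ∀ θ : Θ,
      ‖fderiv ℝ (sHat π fh s₀ i) θ - fderiv ℝ (sHat π f s₀ i) θ‖ ≤
        ((εf + 2 * Lf * Lπ) * (((1 + Lπ) * Lfh * Lθ * ∑ j ∈ Finset.range (i-1), (Lfh * (1 + Lπ)) ^ j) + Lθ) + 2 * Lf * Lθ) *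
          ∑ j ∈ Finset.range i, (Lf * (1 + Lπ)) ^ j := by
  have hLθ : 0 ≤ Lθ := le_trans (norm_nonneg _) (hπθ ((0 : Θ), s₀))
  have hLπ : 0 ≤ Lπ := le_trans (norm_nonneg _) (hπs ((0 : Θ), s₀))
  have hLfh : 0 ≤ Lfh := le_trans (norm_nonneg _) (hfhs (s₀, π (0, s₀)))
  have hLf : 0 ≤ Lf := le_trans (norm_nonneg _) (hfs (s₀, π (0, s₀)))
  have hM : 0 ≤ Lf * (1 + Lπ) := mul_nonneg hLf (by linarith)
  have hMh : 0 ≤ Lfh * (1 + Lπ) := mul_nonneg hLfh (by linarith)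
  set K : ℕ → ℝ := fun n => ((1 + Lπ) * Lfh * Lθ * ∑ j ∈ Finset.range n, (Lfh * (1 + Lπ)) ^ j) + Lθ with hKdef
  set C : ℕ → ℝ := fun n => (εf + 2 * Lf * Lπ) * K n + 2 * Lf * Lθ with hCdef
  have hSh : ∀ n, (0:ℝ) ≤ ∑ j ∈ Finset.range n, (Lfh * (1 + Lπ)) ^ j :=
    fun n => Finset.sum_nonneg fun j _ => pow_nonneg hMh j
  have hS : ∀ n, (0:ℝ) ≤ ∑ j ∈ Finset.range n, (Lf * (1 + Lπ)) ^ j :=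
    fun n => Finset.sum_nonneg fun j _ => pow_nonneg hM j
  have hK0 : ∀ n, 0 ≤ K n := by
    intro n
    simp only [hKdef]
    nlinarith [mul_nonneg (mul_nonneg (mul_nonneg (by linarith : (0:ℝ) ≤ 1 + Lπ) hLfh) hLθ) (hSh n)]
  have hKmono : ∀ n, K n ≤ K (n+1) := by
    intro n
    simp only [hKdef, Finset.sum_range_succ]
    nlinarith [mul_nonneg (mul_nonneg (mul_nonneg (by linarith : (0:ℝ) ≤ 1 + Lπ) hLfh) hLθ) (pow_nonneg hMh n)]
  have hCmono : ∀ n, C n ≤ C (n+1) := by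
    intro n
    simp only [hCdef]
    have h1 : 0 ≤ εf + 2 * Lf * Lπ := by nlinarith [mul_nonneg hLf hLπ]
    nlinarith [mul_le_mul_of_nonneg_left (hKmono n) h1, mul_nonneg hLf hLθ]
  have hC0 : ∀ n, 0 ≤ C n := by
    intro n
    simp only [hCdef]
    have h1 : 0 ≤ εf + 2 * Lf * Lπ := by nlinarith [mul_nonneg hLf hLπ]
    nlinarith [mul_nonneg h1 (hK0 n), mul_nonneg hLf hLθ]
  have step : ∀ (n : ℕ) (θ : Θ),
      ‖fderiv ℝ (sHat π fh s₀ (n+1)) θ - fderiv ℝ (sHat π f s₀ (n+1)) θ‖ ≤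
        (Lf * (1 + Lπ)) * ‖fderiv ℝ (sHat π fh s₀ n) θ - fderiv ℝ (sHat π f s₀ n) θ‖ + C n := by
    intro n θ
    have hGhK : ‖fderiv ℝ (sHat π fh s₀ n) θ‖ ≤ K n := by
      have := fderiv_sHat_bound π fh s₀ Lθ Lπ Lfh hπdiff hfhdiff hπθ hπs hfhs hfha n θ
      simp only [hKdef]
      nlinarith [mul_nonneg (mul_nonneg (mul_nonneg hLπ hLfh) hLθ) (hSh n)]
    have hHhK : ‖fderiv ℝ (aHat π fh s₀ n) θ‖ ≤ K n := by
      have := fderiv_aHat_bound π fh s₀ Lθ Lπ Lfh hπdiff hfhdiff hπθ hπs hfhs hfha n θ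
      simp only [hKdef]
      nlinarith [mul_nonneg (mul_nonneg hLfh hLθ) (hSh n)]
    have herr := hmodelerr (n+1) (by omega) θ
    simp only [Nat.add_sub_cancel] at herr
    rw [fderiv_sHat_succ π fh s₀ hπdiff hfhdiff n θ, fderiv_sHat_succ π f s₀ hπdiff hfdiff n θ]
    set Ash := fderiv ℝ (fun s => fh (s, aHat π fh s₀ n θ)) (sHat π fh s₀ n θ) with hAsh
    set Aah := fderiv ℝ (fun a => fh (sHat π fh s₀ n θ, a)) (aHat π fh s₀ n θ) with hAah
    set As := fderiv ℝ (fun s => f (s, aHat π f s₀ n θ)) (sHat π f s₀ n θ) with hAs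
    set Aa := fderiv ℝ (fun a => f (sHat π f s₀ n θ, a)) (aHat π f s₀ n θ) with hAa
    set Gh := fderiv ℝ (sHat π fh s₀ n) θ with hGh
    set G := fderiv ℝ (sHat π f s₀ n) θ with hG
    set Hh := fderiv ℝ (aHat π fh s₀ n) θ with hHh
    set H := fderiv ℝ (aHat π f s₀ n) θ with hH
    have hident : Ash.comp Gh + Aah.comp Hh - (As.comp G + Aa.comp H)
        = ((Ash - As).comp Gh + As.comp (Gh - G)) + ((Aah - Aa).comp Hh + Aa.comp (Hh - H)) := by
      simp only [ContinuousLinearMap.sub_comp, ContinuousLinearMap.comp_sub]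
      abel
    rw [hident]
    have hHhHb : ‖Hh - H‖ ≤ 2 * Lθ + 2 * Lπ * K n + Lπ * ‖Gh - G‖ := by
      rw [hHh, hH, fderiv_aHat π fh s₀ hπdiff hfhdiff n θ, fderiv_aHat π f s₀ hπdiff hfdiff n θ]
      set Pth := fderiv ℝ (fun t => π (t, sHat π fh s₀ n θ)) θ with hPth
      set Pt := fderiv ℝ (fun t => π (t, sHat π f s₀ n θ)) θ with hPt
      set Psh := fderiv ℝ (fun s => π (θ, s)) (sHat π fh s₀ n θ) with hPsh
      set Ps := fderiv ℝ (fun s => π (θ, s)) (sHat π f s₀ n θ) with hPs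
      have hid2 : (Pth + Psh.comp Gh) - (Pt + Ps.comp G)
          = (Pth - Pt) + ((Psh - Ps).comp Gh + Ps.comp (Gh - G)) := by
        simp only [ContinuousLinearMap.sub_comp, ContinuousLinearMap.comp_sub]
        abel
      rw [hid2]
      have b1 : ‖Pth - Pt‖ ≤ 2 * Lθ := by
        refine le_trans (norm_sub_le _ _) ?_
        have q1 : ‖Pth‖ ≤ Lθ := hπθ (θ, sHat π fh s₀ n θ)
        have q2 : ‖Pt‖ ≤ Lθ := hπθ (θ, sHat π f s₀ n θ)
        linarith
      have b2 : ‖(Psh - Ps).comp Gh‖ ≤ 2 * Lπ * K n := by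
        refine le_trans (ContinuousLinearMap.opNorm_comp_le _ _) ?_
        have h1 : ‖Psh - Ps‖ ≤ 2 * Lπ := by
          refine le_trans (norm_sub_le _ _) ?_
          have q1 : ‖Psh‖ ≤ Lπ := hπs (θ, sHat π fh s₀ n θ)
          have q2 : ‖Ps‖ ≤ Lπ := hπs (θ, sHat π f s₀ n θ)
          linarith
        calc ‖Psh - Ps‖ * ‖Gh‖ ≤ (2 * Lπ) * K n :=
              mul_le_mul h1 hGhK (norm_nonneg _) (by linarith)
          _ = 2 * Lπ * K n := by ring
      have b3 : ‖Ps.comp (Gh - G)‖ ≤ Lπ * ‖Gh - G‖ := by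
        refine le_trans (ContinuousLinearMap.opNorm_comp_le _ _) ?_
        exact mul_le_mul_of_nonneg_right (hπs (θ, sHat π f s₀ n θ)) (norm_nonneg _)
      calc ‖(Pth - Pt) + ((Psh - Ps).comp Gh + Ps.comp (Gh - G))‖
          ≤ ‖Pth - Pt‖ + (‖(Psh - Ps).comp Gh‖ + ‖Ps.comp (Gh - G)‖) :=
            le_trans (norm_add_le _ _) (by gcongr; exact norm_add_le _ _)
        _ ≤ 2 * Lθ + 2 * Lπ * K n + Lπ * ‖Gh - G‖ := by linarith
    have t1 : ‖(Ash - As).comp Gh‖ ≤ ‖Ash - As‖ * K n :=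
      le_trans (ContinuousLinearMap.opNorm_comp_le _ _)
        (mul_le_mul_of_nonneg_left hGhK (norm_nonneg _))
    have t2 : ‖As.comp (Gh - G)‖ ≤ Lf * ‖Gh - G‖ :=
      le_trans (ContinuousLinearMap.opNorm_comp_le _ _)
        (mul_le_mul_of_nonneg_right (hfs (sHat π f s₀ n θ, aHat π f s₀ n θ)) (norm_nonneg _))
    have t3 : ‖(Aah - Aa).comp Hh‖ ≤ ‖Aah - Aa‖ * K n :=
      le_trans (ContinuousLinearMap.opNorm_comp_le _ _)
        (mul_le_mul_of_nonneg_left hHhK (norm_nonneg _))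
    have t4 : ‖Aa.comp (Hh - H)‖ ≤ Lf * (2 * Lθ + 2 * Lπ * K n + Lπ * ‖Gh - G‖) := by
      refine le_trans (ContinuousLinearMap.opNorm_comp_le _ _) ?_
      have this : ‖Aa‖ ≤ Lf := hfa (sHat π f s₀ n θ, aHat π f s₀ n θ)
      exact mul_le_mul this hHhHb (norm_nonneg _) hLf
    have total : ‖((Ash - As).comp Gh + As.comp (Gh - G)) + ((Aah - Aa).comp Hh + Aa.comp (Hh - H))‖
        ≤ ‖Ash - As‖ * K n + Lf * ‖Gh - G‖ + (‖Aah - Aa‖ * K n + Lf * (2 * Lθ + 2 * Lπ * K n + Lπ * ‖Gh - G‖)) := by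
      refine le_trans (norm_add_le _ _) ?_
      have u1 := le_trans (norm_add_le ((Ash - As).comp Gh) (As.comp (Gh - G))) (add_le_add t1 t2)
      have u2 := le_trans (norm_add_le ((Aah - Aa).comp Hh) (Aa.comp (Hh - H))) (add_le_add t3 t4)
      linarith
    have hsum : (‖Ash - As‖ + ‖Aah - Aa‖) * K n ≤ εf * K n :=
      mul_le_mul_of_nonneg_right herr (hK0 n)
    simp only [hCdef]
    linarith [total, hsum]
  -- main induction
  have key : ∀ (n : ℕ) (θ : Θ),
      ‖fderiv ℝ (sHat π fh s₀ (n+1)) θ - fderiv ℝ (sHat π f s₀ (n+1)) θ‖ ≤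
        C n * ∑ j ∈ Finset.range (n+1), (Lf * (1 + Lπ)) ^ j := by
    intro n
    induction n with
    | zero =>
      intro θ
      have h := step 0 θ
      have e1 : fderiv ℝ (sHat π fh s₀ 0) θ = 0 := by
        show fderiv ℝ (fun _ : Θ => s₀) θ = 0
        simp
      have e2 : fderiv ℝ (sHat π f s₀ 0) θ = 0 := by
        show fderiv ℝ (fun _ : Θ => s₀) θ = 0
        simp
      rw [e1, e2, sub_zero, norm_zero, mul_zero, zero_add] at h
      simpa using h
    | succ n ih =>
      intro θ
      have h := step (n+1) θ
      have h1 := mul_le_mul_of_nonneg_left (ih θ) hM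
      have h2 : (Lf * (1 + Lπ)) * (C n * ∑ j ∈ Finset.range (n+1), (Lf * (1 + Lπ)) ^ j)
          ≤ (Lf * (1 + Lπ)) * (C (n+1) * ∑ j ∈ Finset.range (n+1), (Lf * (1 + Lπ)) ^ j) :=
        mul_le_mul_of_nonneg_left
          (mul_le_mul_of_nonneg_right (hCmono n) (hS (n+1))) hM
      rw [geom_sum_succ]
      linarith [h, h1, h2]
  intro i hi θ
  obtain ⟨n, rfl⟩ : ∃ n, i = n + 1 := ⟨i - 1, by omega⟩
  simpa only [Nat.add_sub_cancel] using key n θ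

/-- **Derivative-bias propagation, state part** (equation (35)). Comparing the model
rollout (dynamics `f̂`, Lipschitz `L_f̂`) with the true rollout (dynamics `f`, Lipschitz
`L_f`) from the same initial state: if `ε_f` bounds the sum of the partial-derivative
errors of the model along the rollouts, then for `i ≥ 1`,
`‖D_θ ŝ_i(θ) − D_θ s_i(θ)‖ ≤ ((ε_f + 2 L_f L_π) K̂(i−1) + 2 L_f L_θ) ∑_{j<i} M_f^j`,
`M_f = L_f (1 + L_π)`. -/
theorem stmt7 {Θ S A : Type*}
    [NormedAddCommGroup Θ] [NormedSpace ℝ Θ]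
    [NormedAddCommGroup S] [NormedSpace ℝ S]
    [NormedAddCommGroup A] [NormedSpace ℝ A]
    (π : Θ × S → A) (fh f : S × A → S) (s₀ : S)
    (Lθ Lπ Lfh Lf εf : ℝ) (hεf : 0 ≤ εf)
    (hπdiff : Differentiable ℝ π)
    (hπθ : ∀ p : Θ × S, ‖fderiv ℝ (fun θ : Θ => π (θ, p.2)) p.1‖ ≤ Lθ)
    (hπs : ∀ p : Θ × S, ‖fderiv ℝ (fun s : S => π (p.1, s)) p.2‖ ≤ Lπ)
    (hfhdiff : Differentiable ℝ fh)
    (hfhs : ∀ p : S × A, ‖fderiv ℝ (fun s : S => fh (s, p.2)) p.1‖ ≤ Lfh)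
    (hfha : ∀ p : S × A, ‖fderiv ℝ (fun a : A => fh (p.1, a)) p.2‖ ≤ Lfh)
    (hfdiff : Differentiable ℝ f)
    (hfs : ∀ p : S × A, ‖fderiv ℝ (fun s : S => f (s, p.2)) p.1‖ ≤ Lf)
    (hfa : ∀ p : S × A, ‖fderiv ℝ (fun a : A => f (p.1, a)) p.2‖ ≤ Lf)
    (hmodelerr : ∀ i : ℕ, 1 ≤ i → ∀ θ : Θ,
      ‖fderiv ℝ (fun s : S => fh (s, aHat π fh s₀ (i - 1) θ)) (sHat π fh s₀ (i - 1) θ) -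
          fderiv ℝ (fun s : S => f (s, aHat π f s₀ (i - 1) θ)) (sHat π f s₀ (i - 1) θ)‖ +
        ‖fderiv ℝ (fun a : A => fh (sHat π fh s₀ (i - 1) θ, a)) (aHat π fh s₀ (i - 1) θ) -
          fderiv ℝ (fun a : A => f (sHat π f s₀ (i - 1) θ, a)) (aHat π f s₀ (i - 1) θ)‖ ≤
        εf) :
    ∀ i : ℕ, 1 ≤ i → ∀ θ : Θ,
      ‖fderiv ℝ (sHat π fh s₀ i) θ - fderiv ℝ (sHat π f s₀ i) θ‖ ≤
        ((εf + 2 * Lf * Lπ) * Khat Lπ Lfh Lθ (i - 1) + 2 * Lf * Lθ) *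
          ∑ j ∈ Finset.range i, (Lf * (1 + Lπ)) ^ j := by
  intro i hi θ
  have h := stmt7' π fh f s₀ Lθ Lπ Lfh Lf εf hεf hπdiff hπθ hπs hfhdiff hfhs hfha
    hfdiff hfs hfa hmodelerr i hi θ
  simpa only [Khat] using h
end

section
/- Under the model rollout setup, equip S × A with a norm satisfying ‖(u,v)‖ ≤ ‖u‖ + ‖v‖. Let r : S × A → ℝ and Q̂ : S × A → ℝ be differentiable with ‖Dr‖ ≤ L_r and ‖DQ̂‖ ≤ L_Q̂ everywhere, let γ ∈ [0,1], h ≥ 1, and let (s̄_i, ā_i) be a second model rollout generated by the same policy π and model f̂ from a constant initial state s̄₀ ∈ S. Define Ĝ(θ) = D_θ[ ∑_{i=0}^{h−1} γ^i · r(ŝ_i(θ), â_i(θ)) + γ^h · Q̂(ŝ_h(θ), â_h(θ)) ] and Ḡ(θ) the analogous derivative along the second rollout. Then for every θ, ‖Ĝ(θ) − Ḡ(θ)‖ ≤ ∑_{i=0}^{h−1} γ^i · L_r · ( 2·K̂(i) + Δ_i(θ) ) + γ^h · L_Q̂ · ( 2·K̂(h) + Δ_h(θ) ), where Δ_i(θ)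 = ‖D_θŝ_i(θ) − D_θs̄_i(θ)‖ + ‖D_θâ_i(θ) − D_θā_i(θ)‖ and K̂(i) = (1 + L_π)·L_f̂·L_θ·∑_{j=0}^{i−1} (L_f̂(1+L_π))^j + L_θ. -/
open Finset

lemma prod_fderiv_bound {E F G : Type*}
    [NormedAddCommGroup E] [NormedSpace ℝ E]
    [NormedAddCommGroup F] [NormedSpace ℝ F]
    [NormedAddCommGroup G] [NormedSpace ℝ G]
    (f : E × F → G) (hf : Differentiable ℝ f) (L1 L2 : ℝ)
    (h1 : ∀ p : E × F, ‖fderiv ℝ (fun x => f (x, p.2)) p.1‖ ≤ L1)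
    (h2 : ∀ p : E × F, ‖fderiv ℝ (fun y => f (p.1, y)) p.2‖ ≤ L2)
    (p : E × F) (u : E) (v : F) :
    ‖fderiv ℝ f p (u, v)‖ ≤ L1 * ‖u‖ + L2 * ‖v‖ := by
  have hp : HasFDerivAt f (fderiv ℝ f p) (p.1, p.2) := by
    simpa using (hf p).hasFDerivAt
  have e1 : fderiv ℝ (fun x => f (x, p.2)) p.1
      = (fderiv ℝ f p).comp (ContinuousLinearMap.inl ℝ E F) :=
    (hp.comp p.1 (hasFDerivAt_prodMk_left p.1 p.2)).fderiv
  have e2 : fderiv ℝ (fun y => f (p.1, y)) p.2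
      = (fderiv ℝ f p).comp (ContinuousLinearMap.inr ℝ E F) :=
    (hp.comp p.2 (hasFDerivAt_prodMk_right p.1 p.2)).fderiv
  have huv : (u, v) = ((u, 0) : E × F) + (0, v) := by simp
  rw [huv, map_add]
  refine (norm_add_le _ _).trans (add_le_add ?_ ?_)
  · have h1' := h1 p
    rw [e1] at h1'
    have := (((fderiv ℝ f p).comp (ContinuousLinearMap.inl ℝ E F)).le_opNorm u).trans
      (mul_le_mul_of_nonneg_right h1' (norm_nonneg u))
    simpa using this
  · have h2' := h2 p
    rw [e2] at h2'
    have := (((fderiv ℝ f p).comp (ContinuousLinearMap.inr ℝ E F)).le_opNorm v).trans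
      (mul_le_mul_of_nonneg_right h2' (norm_nonneg v))
    simpa using this

lemma prod_norm_le_add {E F : Type*} [NormedAddCommGroup E] [NormedAddCommGroup F]
    (u : E) (v : F) : ‖(u, v)‖ ≤ ‖u‖ + ‖v‖ := by
  rw [Prod.norm_def]
  exact max_le (le_add_of_nonneg_right (norm_nonneg _)) (le_add_of_nonneg_left (norm_nonneg _))

/-- auxiliary: bound on `‖D_θ ŝ_i‖`. -/
noncomputable def Cs (Lπ Lf Lθ : ℝ) (i : ℕ) : ℝ :=
  Lf * Lθ * ∑ j ∈ Finset.range i, (Lf * (1 + Lπ)) ^ j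

/-- **Pathwise gradient comparison of the h-step model value expansion along two
rollouts** (core of the gradient-variance bound, Proposition 2). -/
theorem stmt10 {Θ S A : Type*}
    [NormedAddCommGroup Θ] [NormedSpace ℝ Θ]
    [NormedAddCommGroup S] [NormedSpace ℝ S]
    [NormedAddCommGroup A] [NormedSpace ℝ A]
    (π : Θ × S → A) (f : S × A → S) (s₀ sbar₀ : S)
    (Lθ Lπ Lf Lr LQ : ℝ)
    (hπdiff : Differentiable ℝ π)
    (hπθ : ∀ p : Θ × S, ‖fderiv ℝ (fun θ : Θ => π (θ, p.2)) p.1‖ ≤ Lθ)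
    (hπs : ∀ p : Θ × S, ‖fderiv ℝ (fun s : S => π (p.1, s)) p.2‖ ≤ Lπ)
    (hfdiff : Differentiable ℝ f)
    (hfs : ∀ p : S × A, ‖fderiv ℝ (fun s : S => f (s, p.2)) p.1‖ ≤ Lf)
    (hfa : ∀ p : S × A, ‖fderiv ℝ (fun a : A => f (p.1, a)) p.2‖ ≤ Lf)
    (r Qh : S × A → ℝ)
    (hrdiff : Differentiable ℝ r) (hrL : ∀ x : S × A, ‖fderiv ℝ r x‖ ≤ Lr)
    (hQdiff : Differentiable ℝ Qh) (hQL : ∀ x : S × A, ‖fderiv ℝ Qh x‖ ≤ LQ)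
    (γ : ℝ) (hγ : γ ∈ Set.Icc (0 : ℝ) 1) (h : ℕ) (hh : 1 ≤ h) :
    ∀ θ : Θ,
      ‖fderiv ℝ (fun θ' : Θ =>
            (∑ i ∈ Finset.range h, γ ^ i * r (sHat π f s₀ i θ', aHat π f s₀ i θ')) +
              γ ^ h * Qh (sHat π f s₀ h θ', aHat π f s₀ h θ')) θ -
          fderiv ℝ (fun θ' : Θ =>
            (∑ i ∈ Finset.range h, γ ^ i * r (sHat π f sbar₀ i θ', aHat π f sbar₀ i θ')) +
              γ ^ h * Qh (sHat π f sbar₀ h θ', aHat π f sbar₀ h θ')) θ‖ ≤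
        (∑ i ∈ Finset.range h, γ ^ i * Lr *
            (2 * Khat Lπ Lf Lθ i +
              (‖fderiv ℝ (sHat π f s₀ i) θ - fderiv ℝ (sHat π f sbar₀ i) θ‖ +
                ‖fderiv ℝ (aHat π f s₀ i) θ - fderiv ℝ (aHat π f sbar₀ i) θ‖))) +
          γ ^ h * LQ *
            (2 * Khat Lπ Lf Lθ h +
              (‖fderiv ℝ (sHat π f s₀ h) θ - fderiv ℝ (sHat π f sbar₀ h) θ‖ +
                ‖fderiv ℝ (aHat π f s₀ h) θ - fderiv ℝ (aHat π f sbar₀ h) θ‖)) := by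
  intro θ
  obtain ⟨hγ0, hγ1⟩ := hγ
  have hLθ0 : 0 ≤ Lθ := le_trans (norm_nonneg _) (hπθ (0, 0))
  have hLπ0 : 0 ≤ Lπ := le_trans (norm_nonneg _) (hπs (0, 0))
  have hLf0 : 0 ≤ Lf := le_trans (norm_nonneg _) (hfs (0, 0))
  have hLr0 : 0 ≤ Lr := le_trans (norm_nonneg _) (hrL (0, 0))
  have hLQ0 : 0 ≤ LQ := le_trans (norm_nonneg _) (hQL (0, 0))
  have hπb : ∀ (p : Θ × S) (u : Θ) (v : S), ‖fderiv ℝ π p (u, v)‖ ≤ Lθ * ‖u‖ + Lπ * ‖v‖ :=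
    prod_fderiv_bound π hπdiff Lθ Lπ hπθ hπs
  have hfb : ∀ (p : S × A) (u : S) (v : A), ‖fderiv ℝ f p (u, v)‖ ≤ Lf * ‖u‖ + Lf * ‖v‖ :=
    prod_fderiv_bound f hfdiff Lf Lf hfs hfa
  -- differentiability of rollouts
  have hsdiff : ∀ (z : S) (i : ℕ), Differentiable ℝ (sHat π f z i) := by
    intro z i
    induction i with
    | zero => exact differentiable_const z
    | succ i ih => exact hfdiff.comp (ih.prodMk (hπdiff.comp (differentiable_id.prodMk ih)))
  have hadiff : ∀ (z : S) (i : ℕ), Differentiable ℝ (aHat π f z i) :=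
    fun z i => hπdiff.comp (differentiable_id.prodMk (hsdiff z i))
  -- derivative formulas
  have haEq : ∀ (z : S) (i : ℕ) (t : Θ),
      HasFDerivAt (aHat π f z i)
        ((fderiv ℝ π (t, sHat π f z i t)).comp
          ((ContinuousLinearMap.id ℝ Θ).prod (fderiv ℝ (sHat π f z i) t))) t := by
    intro z i t
    exact ((hπdiff _).hasFDerivAt).comp t
      ((hasFDerivAt_id t).prodMk ((hsdiff z i t).hasFDerivAt))
  have hsEq : ∀ (z : S) (i : ℕ) (t : Θ),
      HasFDerivAt (sHat π f z (i + 1))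
        ((fderiv ℝ f (sHat π f z i t, aHat π f z i t)).comp
          ((fderiv ℝ (sHat π f z i) t).prod (fderiv ℝ (aHat π f z i) t))) t := by
    intro z i t
    exact ((hfdiff _).hasFDerivAt).comp t
      (((hsdiff z i t).hasFDerivAt).prodMk ((hadiff z i t).hasFDerivAt))
  -- pointwise bounds on the rollout derivatives
  have hsb : ∀ (z : S) (i : ℕ) (t : Θ) (dθ : Θ),
      ‖fderiv ℝ (sHat π f z i) t dθ‖ ≤ Cs Lπ Lf Lθ i * ‖dθ‖ := by
    intro z i
    induction i with
    | zero =>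
      intro t dθ
      have : fderiv ℝ (sHat π f z 0) t = 0 := fderiv_const_apply z
      simp [this, Cs]
    | succ i ih =>
      intro t dθ
      have hab : ‖fderiv ℝ (aHat π f z i) t dθ‖ ≤ (Lθ + Lπ * Cs Lπ Lf Lθ i) * ‖dθ‖ := by
        rw [(haEq z i t).fderiv]
        simp only [ContinuousLinearMap.comp_apply, ContinuousLinearMap.prod_apply,
          ContinuousLinearMap.id_apply]
        calc ‖fderiv ℝ π (t, sHat π f z i t) (dθ, fderiv ℝ (sHat π f z i) t dθ)‖
            ≤ Lθ * ‖dθ‖ + Lπ * ‖fderiv ℝ (sHat π f z i) t dθ‖ := hπb _ _ _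
          _ ≤ Lθ * ‖dθ‖ + Lπ * (Cs Lπ Lf Lθ i * ‖dθ‖) :=
              add_le_add_right (mul_le_mul_of_nonneg_left (ih t dθ) hLπ0) _
          _ = (Lθ + Lπ * Cs Lπ Lf Lθ i) * ‖dθ‖ := by ring
      rw [(hsEq z i t).fderiv]
      simp only [ContinuousLinearMap.comp_apply, ContinuousLinearMap.prod_apply]
      calc ‖fderiv ℝ f (sHat π f z i t, aHat π f z i t)
              (fderiv ℝ (sHat π f z i) t dθ, fderiv ℝ (aHat π f z i) t dθ)‖
          ≤ Lf * ‖fderiv ℝ (sHat π f z i) t dθ‖ + Lf * ‖fderiv ℝ (aHat π f z i) t dθ‖ :=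
            hfb _ _ _
        _ ≤ Lf * (Cs Lπ Lf Lθ i * ‖dθ‖) + Lf * ((Lθ + Lπ * Cs Lπ Lf Lθ i) * ‖dθ‖) :=
            add_le_add (mul_le_mul_of_nonneg_left (ih t dθ) hLf0)
              (mul_le_mul_of_nonneg_left hab hLf0)
        _ = Cs Lπ Lf Lθ (i + 1) * ‖dθ‖ := by
            simp only [Cs, geom_sum_succ]
            ring
  have hab : ∀ (z : S) (i : ℕ) (t : Θ) (dθ : Θ),
      ‖fderiv ℝ (aHat π f z i) t dθ‖ ≤ (Lθ + Lπ * Cs Lπ Lf Lθ i) * ‖dθ‖ := by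
    intro z i t dθ
    rw [(haEq z i t).fderiv]
    simp only [ContinuousLinearMap.comp_apply, ContinuousLinearMap.prod_apply,
      ContinuousLinearMap.id_apply]
    calc ‖fderiv ℝ π (t, sHat π f z i t) (dθ, fderiv ℝ (sHat π f z i) t dθ)‖
        ≤ Lθ * ‖dθ‖ + Lπ * ‖fderiv ℝ (sHat π f z i) t dθ‖ := hπb _ _ _
      _ ≤ Lθ * ‖dθ‖ + Lπ * (Cs Lπ Lf Lθ i * ‖dθ‖) :=
          add_le_add_right (mul_le_mul_of_nonneg_left (hsb z i t dθ) hLπ0) _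
      _ = (Lθ + Lπ * Cs Lπ Lf Lθ i) * ‖dθ‖ := by ring
  -- bound on the composed derivative of a scalar function along a rollout
  have hterm : ∀ (g : S × A → ℝ) (Lg : ℝ), Differentiable ℝ g → (∀ x, ‖fderiv ℝ g x‖ ≤ Lg) →
      0 ≤ Lg → ∀ (z : S) (i : ℕ),
      ‖fderiv ℝ (fun t => g (sHat π f z i t, aHat π f z i t)) θ‖ ≤ Lg * Khat Lπ Lf Lθ i := by
    intro g Lg hgdiff hgL hLg0 z i
    have hKnn : 0 ≤ Khat Lπ Lf Lθ i := by
      unfold Khat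
      have hsum : (0:ℝ) ≤ ∑ j ∈ Finset.range i, (Lf * (1 + Lπ)) ^ j :=
        Finset.sum_nonneg fun j _ => pow_nonneg (by positivity) j
      have : (0:ℝ) ≤ (1 + Lπ) * Lf * Lθ := by positivity
      nlinarith
    have hfd : HasFDerivAt (fun t => g (sHat π f z i t, aHat π f z i t))
        ((fderiv ℝ g (sHat π f z i θ, aHat π f z i θ)).comp
          ((fderiv ℝ (sHat π f z i) θ).prod (fderiv ℝ (aHat π f z i) θ))) θ :=
      ((hgdiff _).hasFDerivAt).comp θ
        (((hsdiff z i θ).hasFDerivAt).prodMk ((hadiff z i θ).hasFDerivAt))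
    rw [hfd.fderiv]
    refine ContinuousLinearMap.opNorm_le_bound _ (mul_nonneg hLg0 hKnn) fun dθ => ?_
    simp only [ContinuousLinearMap.comp_apply, ContinuousLinearMap.prod_apply]
    calc ‖fderiv ℝ g (sHat π f z i θ, aHat π f z i θ)
            (fderiv ℝ (sHat π f z i) θ dθ, fderiv ℝ (aHat π f z i) θ dθ)‖
        ≤ Lg * ‖(fderiv ℝ (sHat π f z i) θ dθ, fderiv ℝ (aHat π f z i) θ dθ)‖ :=
          ContinuousLinearMap.le_of_opNorm_le _ (hgL _) _
      _ ≤ Lg * (‖fderiv ℝ (sHat π f z i) θ dθ‖ + ‖fderiv ℝ (aHat π f z i) θ dθ‖) :=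
          mul_le_mul_of_nonneg_left (prod_norm_le_add _ _) hLg0
      _ ≤ Lg * (Cs Lπ Lf Lθ i * ‖dθ‖ + (Lθ + Lπ * Cs Lπ Lf Lθ i) * ‖dθ‖) :=
          mul_le_mul_of_nonneg_left (add_le_add (hsb z i θ dθ) (hab z i θ dθ)) hLg0
      _ = Lg * Khat Lπ Lf Lθ i * ‖dθ‖ := by
          simp only [Khat, Cs]
          ring
  -- differentiability of terms
  have hTdiff : ∀ (z : S) (i : ℕ),
      Differentiable ℝ (fun t => r (sHat π f z i t, aHat π f z i t)) :=
    fun z i => hrdiff.comp ((hsdiff z i).prodMk (hadiff z i))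
  have hQTdiff : ∀ (z : S),
      Differentiable ℝ (fun t => Qh (sHat π f z h t, aHat π f z h t)) :=
    fun z => hQdiff.comp ((hsdiff z h).prodMk (hadiff z h))
  -- decompose the full derivative
  have hF : ∀ z : S,
      fderiv ℝ (fun t =>
        (∑ i ∈ Finset.range h, γ ^ i * r (sHat π f z i t, aHat π f z i t)) +
          γ ^ h * Qh (sHat π f z h t, aHat π f z h t)) θ
      = (∑ i ∈ Finset.range h,
          γ ^ i • fderiv ℝ (fun t => r (sHat π f z i t, aHat π f z i t)) θ) +
        γ ^ h • fderiv ℝ (fun t => Qh (sHat π f z h t, aHat π f z h t)) θ := by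
    intro z
    have d1 : DifferentiableAt ℝ
        (fun t => ∑ i ∈ Finset.range h, γ ^ i * r (sHat π f z i t, aHat π f z i t)) θ :=
      (Differentiable.fun_sum fun i _ => (hTdiff z i).const_mul (γ ^ i)) θ
    have d2 : DifferentiableAt ℝ
        (fun t => γ ^ h * Qh (sHat π f z h t, aHat π f z h t)) θ :=
      ((hQTdiff z).const_mul (γ ^ h)) θ
    rw [fderiv_fun_add d1 d2,
      fderiv_fun_sum fun i _ => ((hTdiff z i).const_mul (γ ^ i)) θ,
      fderiv_const_mul ((hQTdiff z) θ) (γ ^ h)]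
    exact congrArg₂ (· + ·)
      (Finset.sum_congr rfl fun i _ => fderiv_const_mul ((hTdiff z i) θ) (γ ^ i)) rfl
  rw [hF s₀, hF sbar₀]
  have hsplit :
      ((∑ i ∈ Finset.range h,
          γ ^ i • fderiv ℝ (fun t => r (sHat π f s₀ i t, aHat π f s₀ i t)) θ) +
        γ ^ h • fderiv ℝ (fun t => Qh (sHat π f s₀ h t, aHat π f s₀ h t)) θ) -
      ((∑ i ∈ Finset.range h,
          γ ^ i • fderiv ℝ (fun t => r (sHat π f sbar₀ i t, aHat π f sbar₀ i t)) θ) +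
        γ ^ h • fderiv ℝ (fun t => Qh (sHat π f sbar₀ h t, aHat π f sbar₀ h t)) θ)
      = (∑ i ∈ Finset.range h,
          γ ^ i • (fderiv ℝ (fun t => r (sHat π f s₀ i t, aHat π f s₀ i t)) θ -
            fderiv ℝ (fun t => r (sHat π f sbar₀ i t, aHat π f sbar₀ i t)) θ)) +
        γ ^ h • (fderiv ℝ (fun t => Qh (sHat π f s₀ h t, aHat π f s₀ h t)) θ -
          fderiv ℝ (fun t => Qh (sHat π f sbar₀ h t, aHat π f sbar₀ h t)) θ) := by
    simp only [smul_sub, Finset.sum_sub_distrib]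
    abel
  rw [hsplit]
  refine (norm_add_le _ _).trans (add_le_add ?_ ?_)
  · refine (norm_sum_le _ _).trans (Finset.sum_le_sum fun i _ => ?_)
    rw [norm_smul, Real.norm_eq_abs, abs_of_nonneg (pow_nonneg hγ0 i)]
    have hA : ‖fderiv ℝ (fun t => r (sHat π f s₀ i t, aHat π f s₀ i t)) θ -
        fderiv ℝ (fun t => r (sHat π f sbar₀ i t, aHat π f sbar₀ i t)) θ‖ ≤
        Lr * (2 * Khat Lπ Lf Lθ i +
          (‖fderiv ℝ (sHat π f s₀ i) θ - fderiv ℝ (sHat π f sbar₀ i) θ‖ +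
            ‖fderiv ℝ (aHat π f s₀ i) θ - fderiv ℝ (aHat π f sbar₀ i) θ‖)) := by
      have h1 := hterm r Lr hrdiff hrL hLr0 s₀ i
      have h2 := hterm r Lr hrdiff hrL hLr0 sbar₀ i
      have h3 : (0:ℝ) ≤ ‖fderiv ℝ (sHat π f s₀ i) θ - fderiv ℝ (sHat π f sbar₀ i) θ‖ +
          ‖fderiv ℝ (aHat π f s₀ i) θ - fderiv ℝ (aHat π f sbar₀ i) θ‖ :=
        add_nonneg (norm_nonneg _) (norm_nonneg _)
      have h4 := norm_sub_le (fderiv ℝ (fun t => r (sHat π f s₀ i t, aHat π f s₀ i t)) θ)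
        (fderiv ℝ (fun t => r (sHat π f sbar₀ i t, aHat π f sbar₀ i t)) θ)
      nlinarith [mul_nonneg hLr0 h3]
    calc γ ^ i * ‖fderiv ℝ (fun t => r (sHat π f s₀ i t, aHat π f s₀ i t)) θ -
          fderiv ℝ (fun t => r (sHat π f sbar₀ i t, aHat π f sbar₀ i t)) θ‖
        ≤ γ ^ i * (Lr * (2 * Khat Lπ Lf Lθ i +
            (‖fderiv ℝ (sHat π f s₀ i) θ - fderiv ℝ (sHat π f sbar₀ i) θ‖ +
              ‖fderiv ℝ (aHat π f s₀ i) θ - fderiv ℝ (aHat π f sbar₀ i) θ‖))) :=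
          mul_le_mul_of_nonneg_left hA (pow_nonneg hγ0 i)
      _ = γ ^ i * Lr * (2 * Khat Lπ Lf Lθ i +
            (‖fderiv ℝ (sHat π f s₀ i) θ - fderiv ℝ (sHat π f sbar₀ i) θ‖ +
              ‖fderiv ℝ (aHat π f s₀ i) θ - fderiv ℝ (aHat π f sbar₀ i) θ‖)) := by ring
  · rw [norm_smul, Real.norm_eq_abs, abs_of_nonneg (pow_nonneg hγ0 h)]
    have hA : ‖fderiv ℝ (fun t => Qh (sHat π f s₀ h t, aHat π f s₀ h t)) θ -
        fderiv ℝ (fun t => Qh (sHat π f sbar₀ h t, aHat π f sbar₀ h t)) θ‖ ≤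
        LQ * (2 * Khat Lπ Lf Lθ h +
          (‖fderiv ℝ (sHat π f s₀ h) θ - fderiv ℝ (sHat π f sbar₀ h) θ‖ +
            ‖fderiv ℝ (aHat π f s₀ h) θ - fderiv ℝ (aHat π f sbar₀ h) θ‖)) := by
      have h1 := hterm Qh LQ hQdiff hQL hLQ0 s₀ h
      have h2 := hterm Qh LQ hQdiff hQL hLQ0 sbar₀ h
      have h3 : (0:ℝ) ≤ ‖fderiv ℝ (sHat π f s₀ h) θ - fderiv ℝ (sHat π f sbar₀ h) θ‖ +
          ‖fderiv ℝ (aHat π f s₀ h) θ - fderiv ℝ (aHat π f sbar₀ h) θ‖ :=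
        add_nonneg (norm_nonneg _) (norm_nonneg _)
      have h4 := norm_sub_le (fderiv ℝ (fun t => Qh (sHat π f s₀ h t, aHat π f s₀ h t)) θ)
        (fderiv ℝ (fun t => Qh (sHat π f sbar₀ h t, aHat π f sbar₀ h t)) θ)
      nlinarith [mul_nonneg hLQ0 h3]
    calc γ ^ h * ‖fderiv ℝ (fun t => Qh (sHat π f s₀ h t, aHat π f s₀ h t)) θ -
          fderiv ℝ (fun t => Qh (sHat π f sbar₀ h t, aHat π f sbar₀ h t)) θ‖
        ≤ γ ^ h * (LQ * (2 * Khat Lπ Lf Lθ h +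
            (‖fderiv ℝ (sHat π f s₀ h) θ - fderiv ℝ (sHat π f sbar₀ h) θ‖ +
              ‖fderiv ℝ (aHat π f s₀ h) θ - fderiv ℝ (aHat π f sbar₀ h) θ‖))) :=
          mul_le_mul_of_nonneg_left hA (pow_nonneg hγ0 h)
      _ = γ ^ h * LQ * (2 * Khat Lπ Lf Lθ h +
            (‖fderiv ℝ (sHat π f s₀ h) θ - fderiv ℝ (sHat π f sbar₀ h) θ‖ +
              ‖fderiv ℝ (aHat π f s₀ h) θ - fderiv ℝ (aHat π f sbar₀ h) θ‖)) := by ring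
end
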